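/- arXiv:1310.4471 — 5 statements merged into one kernel-verified Lean document; each statement's English description precedes it below -/
import Mathlib

section
/- Let H : ℝ → ℂ^{K×K} be such that H(t) is a real symmetric matrix for all t. Then H is a positive definite matrix-valued function if and only if for every x ∈ ℝ^K the real-valued function t ↦ x^⊤ H(t) x is a positive definite function. -/
open Matrix BigOperators
open scoped ComplexOrder

/-- `H : ℝ → ℂ^{K×K}` is a positive definite matrix-valued function. -/
def IsPosDefMatrixFun {K : ℕ} (H : ℝ → Matrix (Fin K) (Fin K) ℂ) : Prop :=
  ∀ (N : ℕ) (t : Fin N → ℝ) (z : Fin N → (Fin K → ℂ)),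
    0 ≤ ∑ i, ∑ j, star (z i) ⬝ᵥ (H (t i - t j)) *ᵥ (z j)
/-- A real-valued function `f : ℝ → ℝ` is positive definite. -/
def IsPosDefFun (f : ℝ → ℝ) : Prop :=
  ∀ (N : ℕ) (t : Fin N → ℝ) (c : Fin N → ℂ),
    0 ≤ ∑ i, ∑ j, c i * (starRingEnd ℂ) (c j) * (f (t i - t j) : ℂ)

section Aux

open Filter

lemma conj_mul_add (z w : ℂ) :
    (starRingEnd ℂ) z * w + (starRingEnd ℂ) w * z = ((2*(z.re*w.re + z.im*w.im) : ℝ) : ℂ) := by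
  apply Complex.ext <;> simp [Complex.mul_re, Complex.mul_im] <;> ring

lemma quad_split {K : ℕ} (A : Matrix (Fin K) (Fin K) ℂ)
    (hre : ∀ i j, (A i j).im = 0) (hs : Aᵀ = A) (ξ : Fin K → ℂ) :
    star ξ ⬝ᵥ A *ᵥ ξ =
      (((∑ i, ∑ j, (ξ i).re * (A i j).re * (ξ j).re) +
       (∑ i, ∑ j, (ξ i).im * (A i j).re * (ξ j).im) : ℝ) : ℂ) := by
  have hA : ∀ i j, A i j = ((A i j).re : ℂ) := fun i j => by
    apply Complex.ext <;> simp [hre]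
  have hsym : ∀ i j, (A i j).re = (A j i).re := fun i j => by
    conv_rhs => rw [← hs]
    rw [Matrix.transpose_apply]
  have h1 : star ξ ⬝ᵥ A *ᵥ ξ = ∑ i, ∑ j, (starRingEnd ℂ) (ξ i) * ξ j * ((A i j).re : ℂ) := by
    simp only [dotProduct, mulVec, Pi.star_apply, Finset.mul_sum, RCLike.star_def]
    refine Finset.sum_congr rfl fun i _ => Finset.sum_congr rfl fun j _ => ?_
    rw [hA i j, Complex.ofReal_re]; ring
  have h2 : star ξ ⬝ᵥ A *ᵥ ξ = ∑ i, ∑ j, (starRingEnd ℂ) (ξ j) * ξ i * ((A i j).re : ℂ) := by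
    rw [h1, Finset.sum_comm]
    refine Finset.sum_congr rfl fun i _ => Finset.sum_congr rfl fun j _ => ?_
    rw [hsym i j]
  have key : (2:ℂ) * (star ξ ⬝ᵥ A *ᵥ ξ)
      = ∑ i, ∑ j, ((2*((ξ i).re*(ξ j).re + (ξ i).im*(ξ j).im) : ℝ) : ℂ) * ((A i j).re : ℂ) := by
    rw [two_mul]
    nth_rewrite 1 [h1]
    nth_rewrite 1 [h2]
    rw [← Finset.sum_add_distrib]
    refine Finset.sum_congr rfl fun i _ => ?_
    rw [← Finset.sum_add_distrib]
    refine Finset.sum_congr rfl fun j _ => ?_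
    rw [← add_mul, conj_mul_add]
  have rhs2 : (2:ℂ) * (((∑ i, ∑ j, (ξ i).re * (A i j).re * (ξ j).re) +
       (∑ i, ∑ j, (ξ i).im * (A i j).re * (ξ j).im) : ℝ) : ℂ)
      = ∑ i, ∑ j, ((2*((ξ i).re*(ξ j).re + (ξ i).im*(ξ j).im) : ℝ) : ℂ) * ((A i j).re : ℂ) := by
    push_cast
    rw [mul_add, Finset.mul_sum, Finset.mul_sum, ← Finset.sum_add_distrib]
    refine Finset.sum_congr rfl fun i _ => ?_
    rw [Finset.mul_sum, Finset.mul_sum, ← Finset.sum_add_distrib]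
    refine Finset.sum_congr rfl fun j _ => ?_
    ring
  exact mul_left_cancel₀ two_ne_zero (key.trans rhs2.symm)

lemma Qpos {K : ℕ} (H : ℝ → Matrix (Fin K) (Fin K) ℂ)
    (hreal : ∀ t i j, (H t i j).im = 0)
    (hsym : ∀ t, (H t)ᵀ = H t)
    (hyp : ∀ x : Fin K → ℝ, IsPosDefFun (fun t => ∑ i, ∑ j, x i * (H t i j).re * x j))
    (M : ℕ) (τ : Fin M → ℝ) (c : Fin M → ℂ) (ξ : Fin K → ℂ) :
    0 ≤ ∑ s, ∑ r, c s * (starRingEnd ℂ) (c r) * (star ξ ⬝ᵥ (H (τ s - τ r)) *ᵥ ξ) := by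
  have ha := hyp (fun k => (ξ k).re) M τ c
  have hb := hyp (fun k => (ξ k).im) M τ c
  simp only at ha hb
  refine le_of_le_of_eq (add_nonneg ha hb) ?_
  rw [← Finset.sum_add_distrib]
  refine Finset.sum_congr rfl fun s _ => ?_
  rw [← Finset.sum_add_distrib]
  refine Finset.sum_congr rfl fun r _ => ?_
  rw [quad_split (H (τ s - τ r)) (hreal _) (hsym _) ξ]
  push_cast
  ring

lemma Qpos' {K : ℕ} (H : ℝ → Matrix (Fin K) (Fin K) ℂ)
    (hreal : ∀ t i j, (H t i j).im = 0)
    (hsym : ∀ t, (H t)ᵀ = H t)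
    (hyp : ∀ x : Fin K → ℝ, IsPosDefFun (fun t => ∑ i, ∑ j, x i * (H t i j).re * x j))
    (ι : Type) [Fintype ι] (τ : ι → ℝ) (c : ι → ℂ) (ξ : Fin K → ℂ) :
    0 ≤ ∑ s, ∑ r, c s * (starRingEnd ℂ) (c r) * (star ξ ⬝ᵥ (H (τ s - τ r)) *ᵥ ξ) := by
  have h := Qpos H hreal hsym hyp (Fintype.card ι) (τ ∘ (Fintype.equivFin ι).symm)
    (c ∘ (Fintype.equivFin ι).symm) ξ
  rw [← Equiv.sum_comp (Fintype.equivFin ι).symm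
    (fun s => ∑ r, c s * (starRingEnd ℂ) (c r) * (star ξ ⬝ᵥ (H (τ s - τ r)) *ᵥ ξ))]
  refine le_of_le_of_eq h (Finset.sum_congr rfl fun s _ => ?_)
  rw [← Equiv.sum_comp (Fintype.equivFin ι).symm
    (fun r => c _ * (starRingEnd ℂ) (c r) * (star ξ ⬝ᵥ (H (τ _ - τ r)) *ᵥ ξ))]
  rfl

noncomputable def Efun (L : ℕ) (M : ℤ) : ℂ := Complex.exp (2*Real.pi*Complex.I*M/L)

lemma Efun_conj (L : ℕ) (M : ℤ) : (starRingEnd ℂ) (Efun L M) = Efun L (-M) := by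
  unfold Efun
  rw [← Complex.exp_conj]
  congr 1
  simp [map_div₀, _root_.map_mul, Complex.conj_I, map_ofNat]

lemma Efun_mul (L : ℕ) (M M' : ℤ) : Efun L M * Efun L M' = Efun L (M + M') := by
  unfold Efun
  rw [← Complex.exp_add]
  congr 1
  push_cast
  ring

lemma Efun_combine (L : ℕ) (j : ℕ) (M1 M2 M3 M4 : ℤ) :
    Efun L M1 ^ j * (starRingEnd ℂ) (Efun L M2 ^ j) * ((starRingEnd ℂ) (Efun L M3 ^ j) * Efun L M4 ^ j)
      = Efun L (M1 - M2 - M3 + M4) ^ j := by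
  rw [map_pow, map_pow, Efun_conj, Efun_conj, ← mul_pow, ← mul_pow, ← mul_pow,
    Efun_mul, Efun_mul, Efun_mul]
  congr 2
  ring

lemma root_sum (L : ℕ) (hL : 0 < L) (M : ℤ) :
    ∑ j ∈ Finset.range L, Complex.exp (2*Real.pi*Complex.I*M/L) ^ j
      = if (L:ℤ) ∣ M then (L:ℂ) else 0 := by
  have hLC : (L:ℂ) ≠ 0 := Nat.cast_ne_zero.mpr hL.ne'
  have hpi : (2*(Real.pi:ℂ)*Complex.I : ℂ) ≠ 0 := by
    simp [Real.pi_ne_zero, Complex.I_ne_zero]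
  by_cases hdvd : (L:ℤ) ∣ M
  · obtain ⟨n, rfl⟩ := hdvd
    rw [if_pos ⟨n, rfl⟩]
    have h1 : (2*(Real.pi:ℂ)*Complex.I*(((L:ℤ)*n : ℤ):ℂ)/(L:ℂ)) = (n:ℤ) * (2*Real.pi*Complex.I) := by
      push_cast
      field_simp
    rw [h1, Complex.exp_int_mul_two_pi_mul_I]
    simp
  · rw [if_neg hdvd]
    set x := Complex.exp (2*Real.pi*Complex.I*M/L) with hx
    have hxL : x ^ L = 1 := by
      rw [hx, ← Complex.exp_nat_mul]
      have : (L:ℂ) * (2*Real.pi*Complex.I*M/L) = (M:ℤ) * (2*Real.pi*Complex.I) := by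
        field_simp
      rw [this, Complex.exp_int_mul_two_pi_mul_I]
    have hx1 : x ≠ 1 := by
      intro h
      rw [hx, Complex.exp_eq_one_iff] at h
      obtain ⟨n, hn⟩ := h
      apply hdvd
      refine ⟨n, ?_⟩
      have h2 : (M:ℂ) = (L:ℂ) * n := by
        field_simp at hn
        apply mul_left_cancel₀ hpi
        linear_combination (2*(Real.pi:ℂ)*Complex.I) * hn
      exact_mod_cast h2
    rw [geom_sum_eq hx1, hxL]
    simp

lemma Efun_geom (L : ℕ) (hL : 0 < L) (M : ℤ) :
    ∑ j ∈ Finset.range L, Efun L M ^ j = if (L:ℤ) ∣ M then (L:ℂ) else 0 := by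
  unfold Efun
  exact root_sum L hL M


lemma prod_ite_forall {α : Type*} [Fintype α] (P : α → Prop) [DecidablePred P] :
    ∏ a : α, (if P a then (1:ℂ) else 0) = if (∀ a, P a) then 1 else 0 := by
  by_cases h : ∀ a, P a
  · rw [if_pos h]
    exact Finset.prod_eq_one fun a _ => by rw [if_pos (h a)]
  · rw [if_neg h]
    push_neg at h
    obtain ⟨a, ha⟩ := h
    exact Finset.prod_eq_zero (Finset.mem_univ a) (by rw [if_neg ha])

lemma digits_eq_zero (B : ℤ) (hB : 0 < B) :
    ∀ (N : ℕ) (d : ℕ → ℤ), (∀ a, 2 * |d a| < B) →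
      (∑ a ∈ Finset.range N, d a * B^a) = 0 → ∀ a, a < N → d a = 0 := by
  intro N
  induction N with
  | zero => intro d _ _ a ha; omega
  | succ n ih =>
    intro d hd hsum a ha
    rw [Finset.sum_range_succ'] at hsum
    have hfac : ∀ i, d (i+1) * B^(i+1) = B * (d (i+1) * B^i) := fun i => by ring
    rw [Finset.sum_congr rfl (fun i _ => hfac i), ← Finset.mul_sum] at hsum
    have hdvd : B ∣ d 0 := by
      refine ⟨-(∑ i ∈ Finset.range n, d (i+1) * B^i), ?_⟩
      have : d 0 * B ^ 0 = d 0 := by ring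
      rw [this] at hsum
      linarith [hsum]
    have h0 : d 0 = 0 := by
      rcases hdvd with ⟨k, hk⟩
      have h2 := hd 0
      rw [hk, abs_mul, abs_of_pos hB] at h2
      have : |k| = 0 := by nlinarith [abs_nonneg k]
      rw [abs_eq_zero] at this
      rw [hk, this, mul_zero]
    have hrest : (∑ i ∈ Finset.range n, d (i+1) * B^i) = 0 := by
      have : d 0 * B ^ 0 = 0 := by rw [h0]; ring
      rw [this, add_zero] at hsum
      exact (mul_eq_zero.mp hsum).resolve_left hB.ne'
    rcases Nat.eq_zero_or_pos a with h | h
    · rw [h]; exact h0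
    · obtain ⟨b, rfl⟩ : ∃ b, a = b + 1 := ⟨a - 1, by omega⟩
      exact ih (fun i => d (i+1)) (fun i => hd (i+1)) hrest b (by omega)

lemma sum_ite_int_val (m : ℕ) (v : ℤ) :
    ∑ x : Fin m, (if (x:ℤ) = v then (1:ℂ) else 0)
      = if 0 ≤ v ∧ v < m then 1 else 0 := by
  by_cases h : 0 ≤ v ∧ v < m
  · rw [if_pos h]
    have hx : ∀ x : Fin m, ((x:ℤ) = v) ↔ (x = ⟨v.toNat, by omega⟩) := by
      intro x
      constructor
      · intro hh; apply Fin.ext; simp; omega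
      · intro hh; subst hh; simp; omega
    simp [hx]
  · rw [if_neg h]
    apply Finset.sum_eq_zero
    intro x _
    rw [if_neg]
    intro hh
    apply h
    constructor
    · rw [← hh]; positivity
    · rw [← hh]; exact_mod_cast x.isLt

lemma count_coord (m : ℕ) (e : ℤ) (he : e.natAbs ≤ m) :
    ∑ x : Fin m, ∑ y : Fin m, (if (x:ℤ) - (y:ℤ) = e then (1:ℂ) else 0)
      = ((m - e.natAbs : ℕ) : ℂ) := by
  rw [Finset.sum_comm]
  simp only [sub_eq_iff_eq_add]
  have h1 : ∀ y : Fin m, ∑ x : Fin m, (if (x:ℤ) = e + (y:ℤ) then (1:ℂ) else 0)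
      = if 0 ≤ e + (y:ℤ) ∧ e + (y:ℤ) < m then 1 else 0 := fun y => sum_ite_int_val m _
  rw [Finset.sum_congr rfl (fun y _ => h1 y)]
  rw [Fin.sum_univ_eq_sum_range (fun i => if 0 ≤ e + (i:ℤ) ∧ e + (i:ℤ) < (m:ℤ) then (1:ℂ) else 0) m]
  rw [Finset.sum_boole]
  have hfil : (Finset.range m).filter (fun i : ℕ => 0 ≤ e + (i:ℤ) ∧ e + (i:ℤ) < (m:ℤ))
      = Finset.Ico ((-e).toNat) (m - e.toNat) := by
    ext i
    simp only [Finset.mem_filter, Finset.mem_range, Finset.mem_Ico]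
    omega
  rw [hfil, Nat.card_Ico]
  norm_cast
  omega

def eF (Nn : ℕ) (p q a : Fin Nn) : ℤ := (if a = p then 1 else 0) - (if a = q then 1 else 0)
def phiF (m Nn : ℕ) (s : Fin Nn → Fin m) : ℤ := ∑ a, (s a : ℤ) * ((2*m+1 : ℤ))^(a:ℕ)
def psiF (m Nn : ℕ) (p : Fin Nn) : ℤ := ((2*m+1:ℤ))^(p:ℕ)

lemma hM_eq (m Nn : ℕ) (s r : Fin Nn → Fin m) (p q : Fin Nn) :
    phiF m Nn s - phiF m Nn r - psiF m Nn p + psiF m Nn q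
      = ∑ a : Fin Nn, ((s a : ℤ) - (r a : ℤ) - eF Nn p q a) * ((2*m+1:ℤ))^(a:ℕ) := by
  have hpsi : ∀ u : Fin Nn, psiF m Nn u = ∑ a : Fin Nn, (if a = u then ((2*m+1:ℤ))^(a:ℕ) else 0) := by
    intro u
    rw [Finset.sum_ite_eq' Finset.univ u (fun a => ((2*m+1:ℤ))^(a:ℕ))]
    simp [psiF]
  unfold phiF
  rw [hpsi p, hpsi q, ← Finset.sum_sub_distrib, ← Finset.sum_sub_distrib, ← Finset.sum_add_distrib]
  refine Finset.sum_congr rfl fun a _ => ?_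
  unfold eF
  split_ifs <;> ring

lemma dvd_iff_cond (m Nn : ℕ) (hm : 0 < m) (s r : Fin Nn → Fin m) (p q : Fin Nn) :
    ((2*m+1:ℤ)^Nn ∣ phiF m Nn s - phiF m Nn r - psiF m Nn p + psiF m Nn q) ↔
      (∀ a, (s a : ℤ) - (r a : ℤ) = eF Nn p q a) := by
  set B : ℤ := 2*m+1 with hBdef
  have hB : 0 < B := by omega
  constructor
  · intro h
    rw [hM_eq] at h
    -- digit bound
    have hd : ∀ a : Fin Nn, 2 * |(s a : ℤ) - (r a : ℤ) - eF Nn p q a| < B := by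
      intro a
      have h1 : ((s a : ℕ) : ℤ) < m := by exact_mod_cast (s a).isLt
      have h2 : ((r a : ℕ) : ℤ) < m := by exact_mod_cast (r a).isLt
      have h3 : (0:ℤ) ≤ ((s a : ℕ) : ℤ) := by positivity
      have h4 : (0:ℤ) ≤ ((r a : ℕ) : ℤ) := by positivity
      unfold eF
      split_ifs <;>
        rcases abs_cases ((s a : ℤ) - (r a : ℤ) - ((if True then (1:ℤ) else 1))) with h | h <;>
        · rcases abs_cases ((s a : ℤ) - (r a : ℤ) - _) with ⟨heq, _⟩ | ⟨heq, _⟩ <;>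
          rw [heq] <;> omega
    -- M = 0
    have hMb : 2 * |∑ a : Fin Nn, ((s a : ℤ) - (r a : ℤ) - eF Nn p q a) * B^(a:ℕ)| < 2 * B^Nn := by
      have habs : |∑ a : Fin Nn, ((s a : ℤ) - (r a : ℤ) - eF Nn p q a) * B^(a:ℕ)|
          ≤ ∑ a : Fin Nn, |((s a : ℤ) - (r a : ℤ) - eF Nn p q a)| * B^(a:ℕ) := by
        refine le_trans (Finset.abs_sum_le_sum_abs _ _) ?_
        refine Finset.sum_le_sum fun a _ => ?_
        rw [abs_mul, abs_pow, abs_of_pos hB]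
      have hsum : ∑ a : Fin Nn, (2 * |((s a : ℤ) - (r a : ℤ) - eF Nn p q a)|) * B^(a:ℕ)
          ≤ ∑ a : Fin Nn, (B - 1) * B^(a:ℕ) := by
        refine Finset.sum_le_sum fun a _ => ?_
        have := hd a
        have hp : (0:ℤ) ≤ B^(a:ℕ) := by positivity
        exact mul_le_mul_of_nonneg_right (by omega) hp
      have hgeo : ∑ a : Fin Nn, (B - 1) * B^(a:ℕ) = B^Nn - 1 := by
        rw [← Finset.mul_sum]
        rw [Fin.sum_univ_eq_sum_range (fun i => B^i) Nn]
        rw [mul_comm, geom_sum_mul]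
      have h2s : ∑ a : Fin Nn, (2 * |((s a : ℤ) - (r a : ℤ) - eF Nn p q a)|) * B^(a:ℕ)
          = 2 * ∑ a : Fin Nn, |((s a : ℤ) - (r a : ℤ) - eF Nn p q a)| * B^(a:ℕ) := by
        rw [Finset.mul_sum]
        exact Finset.sum_congr rfl fun a _ => by ring
      have hBN : (0:ℤ) < B ^ Nn := by positivity
      omega
    have hM0 : ∑ a : Fin Nn, ((s a : ℤ) - (r a : ℤ) - eF Nn p q a) * B^(a:ℕ) = 0 := by
      rcases h with ⟨k, hk⟩
      rw [hk] at hMb ⊢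
      have hBN : (0:ℤ) < B ^ Nn := by positivity
      have habsk : |B^Nn * k| < B^Nn := by omega
      have habsk2 : B^Nn * |k| < B^Nn * 1 := by
        rw [mul_one]
        rwa [abs_mul, abs_of_pos hBN] at habsk
      have hk1 : |k| < 1 := lt_of_mul_lt_mul_left habsk2 (le_of_lt hBN)
      have hk0 : k = 0 := Int.abs_lt_one_iff.mp hk1
      rw [hk0, mul_zero]
    -- digits
    intro a
    set d : ℕ → ℤ := fun i => if h : i < Nn then ((s ⟨i,h⟩ : ℤ) - (r ⟨i,h⟩ : ℤ) - eF Nn p q ⟨i,h⟩) else 0 with hddef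
    have hrange : ∑ i ∈ Finset.range Nn, d i * B^i = 0 := by
      rw [← Fin.sum_univ_eq_sum_range (fun i => d i * B^i) Nn]
      rw [← hM0]
      refine Finset.sum_congr rfl fun a' _ => ?_
      simp [hddef, a'.isLt]
    have hz := digits_eq_zero B hB Nn d
      (fun i => by
        by_cases h : i < Nn
        · simpa [hddef, h] using hd ⟨i, h⟩
        · simp [hddef, h]; omega)
      hrange (a : ℕ) a.isLt
    simp [hddef, a.isLt] at hz
    omega
  · intro h
    rw [hM_eq]
    have : ∑ a : Fin Nn, ((s a : ℤ) - (r a : ℤ) - eF Nn p q a) * B^(a:ℕ) = 0 :=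
      Finset.sum_eq_zero fun a _ => by rw [h a]; ring
    rw [this]
    exact dvd_zero _

lemma count_multi (Nn m : ℕ) (e : Fin Nn → ℤ) (he : ∀ a, (e a).natAbs ≤ m) :
    ∑ s : (Fin Nn → Fin m), ∑ r : (Fin Nn → Fin m),
      (if (∀ a, (s a : ℤ) - (r a : ℤ) = e a) then (1:ℂ) else 0)
      = ∏ a, ((m - (e a).natAbs : ℕ) : ℂ) := by
  have step1 : ∑ s : (Fin Nn → Fin m), ∑ r : (Fin Nn → Fin m),
      (if (∀ a, (s a : ℤ) - (r a : ℤ) = e a) then (1:ℂ) else 0)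
      = ∑ x : (Fin Nn → Fin m) × (Fin Nn → Fin m),
        (if (∀ a, (x.1 a : ℤ) - (x.2 a : ℤ) = e a) then (1:ℂ) else 0) := by
    rw [← Finset.sum_product']
    rw [Finset.univ_product_univ]
  rw [step1]
  have step2 : ∑ x : (Fin Nn → Fin m) × (Fin Nn → Fin m),
        (if (∀ a, (x.1 a : ℤ) - (x.2 a : ℤ) = e a) then (1:ℂ) else 0)
      = ∑ g : (Fin Nn → Fin m × Fin m),
        (if (∀ a, ((g a).1 : ℤ) - ((g a).2 : ℤ) = e a) then (1:ℂ) else 0) := by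
    rw [← Equiv.sum_comp (Equiv.arrowProdEquivProdArrow (Fin Nn) (fun _ => Fin m) (fun _ => Fin m))
      (fun x => if (∀ a, (x.1 a : ℤ) - (x.2 a : ℤ) = e a) then (1:ℂ) else 0)]
    rfl
  rw [step2]
  have step3 : ∀ g : (Fin Nn → Fin m × Fin m),
      (if (∀ a, ((g a).1 : ℤ) - ((g a).2 : ℤ) = e a) then (1:ℂ) else 0)
      = ∏ a, (if ((g a).1 : ℤ) - ((g a).2 : ℤ) = e a then (1:ℂ) else 0) := by
    intro g
    by_cases h : ∀ a, ((g a).1 : ℤ) - ((g a).2 : ℤ) = e a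
    · rw [if_pos h]
      exact (Finset.prod_eq_one fun a _ => if_pos (h a)).symm
    · rw [if_neg h]
      push_neg at h
      obtain ⟨a, ha⟩ := h
      exact (Finset.prod_eq_zero (Finset.mem_univ a) (if_neg ha : (if ((g a).1 : ℤ) - ((g a).2 : ℤ) = e a then (1:ℂ) else 0) = 0)).symm
  rw [Finset.sum_congr rfl (fun g _ => step3 g)]
  rw [← Fintype.piFinset_univ]
  rw [(Finset.prod_univ_sum (fun _ => (Finset.univ : Finset (Fin m × Fin m)))
    (fun a y => if (((y.1 : ℕ) : ℤ) - ((y.2 : ℕ) : ℤ) = e a) then (1:ℂ) else 0)).symm]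
  refine Finset.prod_congr rfl fun a _ => ?_
  rw [← count_coord m (e a) (he a), ← Finset.sum_product', Finset.univ_product_univ]

lemma dot_left {K N : ℕ} (u : Fin N → ℂ) (z : Fin N → Fin K → ℂ) (w : Fin K → ℂ) :
    star (fun k => ∑ p, u p * z p k) ⬝ᵥ w = ∑ p, (starRingEnd ℂ) (u p) * (star (z p) ⬝ᵥ w) := by
  simp only [dotProduct, Pi.star_apply, star_sum, star_mul', RCLike.star_def, Finset.sum_mul,
    Finset.mul_sum]
  rw [Finset.sum_comm]
  exact Finset.sum_congr rfl fun p _ => Finset.sum_congr rfl fun k _ => by ring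

lemma dot_right {K N : ℕ} (u : Fin N → ℂ) (z : Fin N → Fin K → ℂ) (A : Matrix (Fin K) (Fin K) ℂ)
    (x : Fin K → ℂ) :
    x ⬝ᵥ A *ᵥ (fun l => ∑ q, u q * z q l) = ∑ q, u q * (x ⬝ᵥ A *ᵥ z q) := by
  simp only [dotProduct, mulVec, Finset.mul_sum]
  rw [show (∑ k, ∑ l, ∑ q, x k * (A k l * (u q * z q l)))
      = ∑ k, ∑ q, ∑ l, x k * (A k l * (u q * z q l))
    from Finset.sum_congr rfl fun k _ => Finset.sum_comm]
  rw [Finset.sum_comm]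
  exact Finset.sum_congr rfl fun q _ => Finset.sum_congr rfl fun k _ =>
    Finset.sum_congr rfl fun l _ => by ring

lemma bilin {K N : ℕ} (A : Matrix (Fin K) (Fin K) ℂ) (u : Fin N → ℂ) (z : Fin N → Fin K → ℂ) :
    star (fun k => ∑ p, u p * z p k) ⬝ᵥ A *ᵥ (fun k => ∑ q, u q * z q k)
      = ∑ p, ∑ q, (starRingEnd ℂ) (u p) * u q * (star (z p) ⬝ᵥ A *ᵥ z q) := by
  rw [dot_left u z]
  refine Finset.sum_congr rfl fun p _ => ?_
  rw [dot_right u z A (star (z p)), Finset.mul_sum]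
  exact Finset.sum_congr rfl fun q _ => by ring

lemma sum4_swap {α β : Type*} [Fintype α] [Fintype β] (F : α → α → β → β → ℂ) :
    ∑ s, ∑ r, ∑ p, ∑ q, F s r p q = ∑ p, ∑ q, ∑ s, ∑ r, F s r p q := by
  rw [show ∑ s : α, ∑ r, ∑ p, ∑ q, F s r p q = ∑ s : α, ∑ p : β, ∑ r : α, ∑ q, F s r p q from
    Finset.sum_congr rfl fun s _ => Finset.sum_comm]
  rw [Finset.sum_comm]
  refine Finset.sum_congr rfl fun p _ => ?_
  rw [show ∑ s : α, ∑ r : α, ∑ q : β, F s r p q = ∑ s : α, ∑ q : β, ∑ r : α, F s r p q from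
    Finset.sum_congr rfl fun s _ => Finset.sum_comm]
  exact Finset.sum_comm

lemma key_ineq {K Nn : ℕ} (H : ℝ → Matrix (Fin K) (Fin K) ℂ)
    (hreal : ∀ t i j, (H t i j).im = 0)
    (hsym : ∀ t, (H t)ᵀ = H t)
    (hyp : ∀ x : Fin K → ℝ, IsPosDefFun (fun t => ∑ i, ∑ j, x i * (H t i j).re * x j))
    (t : Fin Nn → ℝ) (z : Fin Nn → Fin K → ℂ) (m : ℕ) (hm : 0 < m) :
    0 ≤ (((2*m+1)^Nn : ℕ) : ℂ) * ∑ p, ∑ q, (∏ a, ((m - (eF Nn p q a).natAbs : ℕ) : ℂ)) *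
        (star (z p) ⬝ᵥ H (t p - t q) *ᵥ z q) := by
  set L : ℕ := (2*m+1)^Nn with hLdef
  have hL : 0 < L := by positivity
  have hcast : ((L:ℕ):ℤ) = (2*m+1:ℤ)^Nn := by rw [hLdef, Nat.cast_pow]; push_cast; ring
  set τ : (Fin Nn → Fin m) → ℝ := fun s => ∑ a, ((s a : ℕ) : ℝ) * t a with hτdef
  have hApos : 0 ≤ ∑ j ∈ Finset.range L, ∑ s, ∑ r,
      (Efun L (phiF m Nn s) ^ j) * (starRingEnd ℂ) (Efun L (phiF m Nn r) ^ j) *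
      (star (fun k => ∑ p, Efun L (psiF m Nn p) ^ j * z p k) ⬝ᵥ H (τ s - τ r) *ᵥ
        (fun k => ∑ q, Efun L (psiF m Nn q) ^ j * z q k)) :=
    Finset.sum_nonneg fun j _ =>
      Qpos' H hreal hsym hyp (Fin Nn → Fin m) τ (fun s => Efun L (phiF m Nn s) ^ j) _
  refine le_of_le_of_eq hApos ?_
  have step1 : ∀ j : ℕ, ∑ s, ∑ r,
      (Efun L (phiF m Nn s) ^ j) * (starRingEnd ℂ) (Efun L (phiF m Nn r) ^ j) *
      (star (fun k => ∑ p, Efun L (psiF m Nn p) ^ j * z p k) ⬝ᵥ H (τ s - τ r) *ᵥ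
        (fun k => ∑ q, Efun L (psiF m Nn q) ^ j * z q k))
      = ∑ s, ∑ r, ∑ p, ∑ q,
        Efun L (phiF m Nn s - phiF m Nn r - psiF m Nn p + psiF m Nn q) ^ j *
          (star (z p) ⬝ᵥ H (τ s - τ r) *ᵥ z q) := by
    intro j
    refine Finset.sum_congr rfl fun s _ => Finset.sum_congr rfl fun r _ => ?_
    rw [bilin (H (τ s - τ r)) (fun p => Efun L (psiF m Nn p) ^ j) z, Finset.mul_sum]
    refine Finset.sum_congr rfl fun p _ => ?_
    rw [Finset.mul_sum]
    refine Finset.sum_congr rfl fun q _ => ?_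
    rw [← Efun_combine L j (phiF m Nn s) (phiF m Nn r) (psiF m Nn p) (psiF m Nn q)]
    ring
  rw [Finset.sum_congr rfl (fun j _ => step1 j)]
  have step2 : ∑ j ∈ Finset.range L, ∑ s, ∑ r, ∑ p, ∑ q,
        Efun L (phiF m Nn s - phiF m Nn r - psiF m Nn p + psiF m Nn q) ^ j *
          (star (z p) ⬝ᵥ H (τ s - τ r) *ᵥ z q)
      = ∑ s, ∑ r, ∑ p, ∑ q,
        (if ((L:ℤ) ∣ (phiF m Nn s - phiF m Nn r - psiF m Nn p + psiF m Nn q)) then (L:ℂ) else 0) *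
          (star (z p) ⬝ᵥ H (τ s - τ r) *ᵥ z q) := by
    rw [Finset.sum_comm]
    refine Finset.sum_congr rfl fun s _ => ?_
    rw [Finset.sum_comm]
    refine Finset.sum_congr rfl fun r _ => ?_
    rw [Finset.sum_comm]
    refine Finset.sum_congr rfl fun p _ => ?_
    rw [Finset.sum_comm]
    refine Finset.sum_congr rfl fun q _ => ?_
    rw [← Finset.sum_mul, Efun_geom L hL]
  rw [step2]
  have step3 : ∀ (s r : Fin Nn → Fin m) (p q : Fin Nn),
      (if ((L:ℤ) ∣ (phiF m Nn s - phiF m Nn r - psiF m Nn p + psiF m Nn q)) then (L:ℂ) else 0) *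
          (star (z p) ⬝ᵥ H (τ s - τ r) *ᵥ z q)
      = (if (∀ a, (s a : ℤ) - (r a : ℤ) = eF Nn p q a) then (1:ℂ) else 0) *
          ((L:ℂ) * (star (z p) ⬝ᵥ H (t p - t q) *ᵥ z q)) := by
    intro s r p q
    by_cases hD : ∀ a, (s a : ℤ) - (r a : ℤ) = eF Nn p q a
    · have hτeq : τ s - τ r = t p - t q := by
        have h1 : τ s - τ r = ∑ a, (((s a : ℕ) : ℝ) - ((r a : ℕ) : ℝ)) * t a := by
          rw [hτdef, ← Finset.sum_sub_distrib]
          exact Finset.sum_congr rfl fun a _ => by ring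
        rw [h1]
        have h2 : ∀ a, (((s a : ℕ) : ℝ) - ((r a : ℕ) : ℝ))
            = (if a = p then (1:ℝ) else 0) - (if a = q then 1 else 0) := by
          intro a
          have h := hD a
          unfold eF at h
          split_ifs at h ⊢ <;> exact_mod_cast h
        rw [Finset.sum_congr rfl (fun a _ => by rw [h2 a])]
        simp only [sub_mul, Finset.sum_sub_distrib, ite_mul, one_mul, zero_mul,
          Finset.sum_ite_eq', Finset.mem_univ, if_true]
      rw [if_pos (by rw [hcast]; exact (dvd_iff_cond m Nn hm s r p q).mpr hD), if_pos hD,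
        one_mul, hτeq]
    · rw [if_neg (fun h => hD ((dvd_iff_cond m Nn hm s r p q).mp (by rw [← hcast]; exact h))),
        if_neg hD, zero_mul, zero_mul]
  rw [Finset.sum_congr rfl (fun s _ => Finset.sum_congr rfl (fun r _ =>
    Finset.sum_congr rfl (fun p _ => Finset.sum_congr rfl (fun q _ => step3 s r p q))))]
  rw [sum4_swap]
  have step4 : ∀ p q : Fin Nn,
      (∑ s : Fin Nn → Fin m, ∑ r : Fin Nn → Fin m,
        (if (∀ a, (s a : ℤ) - (r a : ℤ) = eF Nn p q a) then (1:ℂ) else 0) *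
          ((L:ℂ) * (star (z p) ⬝ᵥ H (t p - t q) *ᵥ z q)))
      = (∏ a, ((m - (eF Nn p q a).natAbs : ℕ) : ℂ)) *
          ((L:ℂ) * (star (z p) ⬝ᵥ H (t p - t q) *ᵥ z q)) := by
    intro p q
    rw [← count_multi Nn m (eF Nn p q) (fun a => by unfold eF; split_ifs <;> omega),
      Finset.sum_mul]
    exact Finset.sum_congr rfl fun s _ => by rw [Finset.sum_mul]
  rw [Finset.sum_congr rfl (fun p _ => Finset.sum_congr rfl (fun q _ => step4 p q))]
  rw [Finset.mul_sum]
  refine Finset.sum_congr rfl fun p _ => ?_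
  rw [Finset.mul_sum]
  refine Finset.sum_congr rfl fun q _ => ?_
  ring

lemma final_limit {Nn : ℕ} (Z : Fin Nn → Fin Nn → ℂ) (e : Fin Nn → Fin Nn → Fin Nn → ℤ)
    (he : ∀ p q a, (e p q a).natAbs ≤ 1)
    (h : ∀ m : ℕ, 0 < m → 0 ≤ (((2*m+1)^Nn : ℕ) : ℂ) *
        ∑ p, ∑ q, (∏ a, ((m - (e p q a).natAbs : ℕ) : ℂ)) * Z p q) :
    0 ≤ ∑ p, ∑ q, Z p q := by
  set ρ : ℕ → Fin Nn → Fin Nn → ℝ :=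
    fun m p q => ∏ a, (((m - (e p q a).natAbs : ℕ) : ℝ) / (m:ℝ)) with hρ
  have hA : ∀ m : ℕ, 0 < m → 0 ≤ ∑ p, ∑ q, ((ρ m p q : ℝ) : ℂ) * Z p q := by
    intro m hm
    have h1 : (0:ℂ) ≤ ((((((2*m+1)^Nn : ℕ) : ℝ))⁻¹ * ((m:ℝ)^Nn)⁻¹ : ℝ) : ℂ) *
        ((((2*m+1)^Nn : ℕ) : ℂ) * ∑ p, ∑ q, (∏ a, ((m - (e p q a).natAbs : ℕ) : ℂ)) * Z p q) :=
      mul_nonneg (Complex.zero_le_real.mpr (by positivity)) (h m hm)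
    refine le_of_le_of_eq h1 ?_
    simp only [Finset.mul_sum]
    refine Finset.sum_congr rfl fun p _ => Finset.sum_congr rfl fun q _ => ?_
    have hcoef : ((((((2*m+1)^Nn : ℕ) : ℝ))⁻¹ * ((m:ℝ)^Nn)⁻¹ : ℝ) : ℂ) *
        ((((2*m+1)^Nn : ℕ) : ℂ) * (∏ a, ((m - (e p q a).natAbs : ℕ) : ℂ)))
        = ((ρ m p q : ℝ) : ℂ) := by
      rw [hρ]
      push_cast
      rw [Finset.prod_div_distrib, Finset.prod_const, Finset.card_univ, Fintype.card_fin]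
      have hL0 : ((2*(m:ℂ)+1)^Nn) ≠ 0 := by
        have : (2*(m:ℂ)+1) ≠ 0 := by
          intro hc
          have h5 := congrArg Complex.re hc
          simp at h5
          have h6 : (0:ℝ) ≤ (m:ℝ) := Nat.cast_nonneg m
          linarith
        exact pow_ne_zero _ this
      have hm0 : ((m:ℂ))^Nn ≠ 0 := pow_ne_zero _ (by exact_mod_cast hm.ne')
      field_simp
    rw [← hcoef]
    ring
  have hρtend : ∀ p q, Tendsto (fun m => ρ m p q) atTop (nhds 1) := by
    intro p q
    have hfac : ∀ a : Fin Nn, Tendsto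
        (fun m : ℕ => (((m - (e p q a).natAbs : ℕ) : ℝ) / (m:ℝ))) atTop (nhds 1) := by
      intro a
      have hk := he p q a
      have h1 : Tendsto (fun m : ℕ => 1 - ((e p q a).natAbs : ℝ)/(m:ℝ)) atTop (nhds 1) := by
        have := (tendsto_const_div_atTop_nhds_zero_nat ((e p q a).natAbs : ℝ)).const_sub 1
        simpa using this
      refine h1.congr' ?_
      filter_upwards [eventually_ge_atTop 1] with m hm
      have hle : (e p q a).natAbs ≤ m := le_trans hk hm
      have hm0 : (m:ℝ) ≠ 0 := by positivity
      rw [Nat.cast_sub hle, sub_div, div_self hm0]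
    have h4 := tendsto_finset_prod (f := fun (a : Fin Nn) (m : ℕ) =>
      (((m - (e p q a).natAbs : ℕ) : ℝ) / (m:ℝ))) (a := fun _ => (1:ℝ))
      Finset.univ (fun a _ => hfac a)
    rw [Finset.prod_const_one] at h4
    exact h4
  -- real components
  have hRe : ∀ m : ℕ, 0 < m → 0 ≤ ∑ p, ∑ q, ρ m p q * (Z p q).re := by
    intro m hm
    have h2 := (Complex.nonneg_iff.mp (hA m hm)).1
    have h3 : (∑ p, ∑ q, ((ρ m p q : ℝ) : ℂ) * Z p q).re
        = ∑ p, ∑ q, ρ m p q * (Z p q).re := by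
      rw [Complex.re_sum]
      refine Finset.sum_congr rfl fun p _ => ?_
      rw [Complex.re_sum]
      exact Finset.sum_congr rfl fun q _ => Complex.re_ofReal_mul _ _
    rwa [h3] at h2
  have hIm : ∀ m : ℕ, 0 < m → 0 = ∑ p, ∑ q, ρ m p q * (Z p q).im := by
    intro m hm
    have h2 := (Complex.nonneg_iff.mp (hA m hm)).2
    have h3 : (∑ p, ∑ q, ((ρ m p q : ℝ) : ℂ) * Z p q).im
        = ∑ p, ∑ q, ρ m p q * (Z p q).im := by
      rw [Complex.im_sum]
      refine Finset.sum_congr rfl fun p _ => ?_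
      rw [Complex.im_sum]
      refine Finset.sum_congr rfl fun q _ => ?_
      simp [Complex.mul_im]
    rwa [h3] at h2
  -- limits
  have htendRe : Tendsto (fun m => ∑ p, ∑ q, ρ m p q * (Z p q).re) atTop
      (nhds (∑ p, ∑ q, (Z p q).re)) := by
    apply tendsto_finset_sum
    intro p _
    apply tendsto_finset_sum
    intro q _
    simpa using (hρtend p q).mul_const ((Z p q).re)
  have htendIm : Tendsto (fun m => ∑ p, ∑ q, ρ m p q * (Z p q).im) atTop
      (nhds (∑ p, ∑ q, (Z p q).im)) := by
    apply tendsto_finset_sum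
    intro p _
    apply tendsto_finset_sum
    intro q _
    simpa using (hρtend p q).mul_const ((Z p q).im)
  have hSre : 0 ≤ ∑ p, ∑ q, (Z p q).re := by
    refine ge_of_tendsto htendRe ?_
    filter_upwards [eventually_ge_atTop 1] with m hm
    exact hRe m hm
  have hSim : ∑ p, ∑ q, (Z p q).im = 0 := by
    refine tendsto_nhds_unique htendIm ?_
    have : (fun m : ℕ => ∑ p, ∑ q, ρ m p q * (Z p q).im) =ᶠ[atTop] (fun _ => (0:ℝ)) := by
      filter_upwards [eventually_ge_atTop 1] with m hm
      exact (hIm m hm).symm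
    rw [Filter.tendsto_congr' this]
    exact tendsto_const_nhds
  rw [Complex.nonneg_iff]
  constructor
  · rw [show ((∑ p, ∑ q, Z p q).re) = ∑ p, ∑ q, (Z p q).re from by
      rw [Complex.re_sum]; exact Finset.sum_congr rfl fun p _ => Complex.re_sum _ _]
    exact hSre
  · rw [show ((∑ p, ∑ q, Z p q).im) = ∑ p, ∑ q, (Z p q).im from by
      rw [Complex.im_sum]; exact Finset.sum_congr rfl fun p _ => Complex.im_sum _ _]
    exact hSim.symm

lemma forward_dir {K : ℕ} (H : ℝ → Matrix (Fin K) (Fin K) ℂ)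
    (hreal : ∀ t i j, (H t i j).im = 0)
    (hpd : IsPosDefMatrixFun H) (x : Fin K → ℝ) :
    IsPosDefFun (fun t => ∑ i, ∑ j, x i * (H t i j).re * x j) := by
  intro N τ c
  have h := hpd N τ (fun i k => (starRingEnd ℂ) (c i) * (x k : ℂ))
  refine le_of_le_of_eq h (Finset.sum_congr rfl fun i _ => Finset.sum_congr rfl fun j _ => ?_)
  have hA : ∀ u k l, H u k l = (((H u k l).re : ℝ) : ℂ) := fun u k l => by
    apply Complex.ext <;> simp [hreal]
  simp only [dotProduct, mulVec, Pi.star_apply, star_mul', RCLike.star_def, Complex.conj_conj,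
    Complex.conj_ofReal]
  push_cast
  rw [Finset.mul_sum]
  refine Finset.sum_congr rfl fun k _ => ?_
  rw [Finset.mul_sum, Finset.mul_sum]
  refine Finset.sum_congr rfl fun l _ => ?_
  rw [hA (τ i - τ j) k l, Complex.ofReal_re]
  ring


end Aux

theorem posDefMatrixFun_iff_quadForm_posDef {K : ℕ}
    (H : ℝ → Matrix (Fin K) (Fin K) ℂ)
    (hreal : ∀ t i j, (H t i j).im = 0)
    (hsym : ∀ t, (H t)ᵀ = H t) :
    IsPosDefMatrixFun H ↔
      ∀ x : Fin K → ℝ, IsPosDefFun (fun t => ∑ i, ∑ j, x i * (H t i j).re * x j) := by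
  constructor
  · intro hpd x
    exact forward_dir H hreal hpd x
  · intro hyp N t z
    refine final_limit (fun p q => star (z p) ⬝ᵥ (H (t p - t q)) *ᵥ (z q))
      (fun p q a => eF N p q a)
      (fun p q a => by simp only [eF]; split_ifs <;> omega)
      (fun m hm => key_ineq H hreal hsym hyp t z m hm)
end

section
/- If a nonincreasing positive definite one-dimensional kernel is considered, i.e., g : [0,∞) → ℝ is nonincreasing and the extension t ↦ g(|t|) is a positive definite function, then g(t) ≥ 0 for all t ≥ 0. -/
open BigOperators

theorem nonincreasing_posDef_scalar_nonneg (g : ℝ → ℝ)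
    (hmono : ∀ s t : ℝ, 0 ≤ s → s ≤ t → g t ≤ g s)
    (hpd : ∀ (N : ℕ) (t : Fin N → ℝ) (x : Fin N → ℝ),
      0 ≤ ∑ i, ∑ j, x i * x j * g |t i - t j|) :
    ∀ t : ℝ, 0 ≤ t → 0 ≤ g t := by
  have hg0 : 0 ≤ g 0 := by
    have := hpd 1 (fun _ => 0) (fun _ => 1)
    simpa using this
  intro t ht
  by_contra h
  push_neg at h
  have hgt : 0 < -g t := by linarith
  obtain ⟨N, hN⟩ := exists_nat_gt (g 0 / (-g t) + 1)
  have hNpos : (0:ℝ) < N := by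
    have : 0 ≤ g 0 / (-g t) := div_nonneg hg0 hgt.le
    linarith
  have hlt : g 0 < ((N:ℝ) - 1) * (-g t) := by
    have h1 : g 0 / (-g t) < (N:ℝ) - 1 := by linarith
    exact (div_lt_iff₀ hgt).mp h1
  have hsum := hpd N (fun i => (i:ℝ) * t) (fun _ => 1)
  simp only [one_mul] at hsum
  have hbound : ∑ i : Fin N, ∑ j : Fin N, g |(i:ℝ) * t - (j:ℝ) * t|
      ≤ ∑ i : Fin N, ∑ j : Fin N, (g t + if i = j then g 0 - g t else 0) := by
    refine Finset.sum_le_sum fun i _ => Finset.sum_le_sum fun j _ => ?_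
    by_cases hij : i = j
    · simp [hij]
    · simp only [hij, if_false, add_zero]
      apply hmono t _ ht
      have heq : (i:ℝ) * t - (j:ℝ) * t = ((i:ℝ) - (j:ℝ)) * t := by ring
      rw [heq, abs_mul, abs_of_nonneg ht]
      have h1 : (1:ℝ) ≤ |(i:ℝ) - (j:ℝ)| := by
        have hz : ((i:ℤ) : ℤ) ≠ (j:ℤ) := by
          exact_mod_cast fun hh => hij (Fin.ext hh)
        have := Int.one_le_abs (sub_ne_zero.mpr hz)
        have : (1:ℝ) ≤ |((i:ℤ):ℝ) - ((j:ℤ):ℝ)| := by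
          rw [← Int.cast_sub, ← Int.cast_abs]
          exact_mod_cast this
        simpa using this
      nlinarith
  have hrhs : ∑ i : Fin N, ∑ j : Fin N, (g t + if i = j then g 0 - g t else 0)
      = (N:ℝ) * ((N:ℝ) * g t + (g 0 - g t)) := by
    have : ∀ i : Fin N, ∑ j : Fin N, (g t + if i = j then g 0 - g t else 0)
        = (N:ℝ) * g t + (g 0 - g t) := by
      intro i
      rw [Finset.sum_add_distrib, Finset.sum_const, Finset.sum_ite_eq]
      simp [mul_comm]
    rw [Finset.sum_congr rfl fun i _ => this i]
    rw [Finset.sum_const]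
    simp; ring
  rw [hrhs] at hbound
  have hfinal : 0 ≤ (N:ℝ) * ((N:ℝ) * g t + (g 0 - g t)) := le_trans hsum hbound
  nlinarith [mul_pos hNpos (by linarith : (0:ℝ) < ((N:ℝ) - 1) * (-g t) - g 0)]
end

section
/- Let G : [0,∞) → ℝ^{K×K} be symmetric (G(t)^⊤ = G(t) for all t), nonnegative, nonincreasing, and convex. Then G is positive definite, i.e., the function t ↦ G(|t|) on ℝ is a positive definite matrix-valued function. -/
open Matrix BigOperators
open scoped ComplexOrder

open MeasureTheory

lemma tri_integral (a si sj : ℝ) :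
    ∫ x : ℝ, (Set.Ioc si (si + a)).indicator 1 x * (Set.Ioc sj (sj + a)).indicator 1 x
      = max (a - |si - sj|) 0 := by
  have h : ∀ x : ℝ, (Set.Ioc si (si+a)).indicator (1 : ℝ → ℝ) x
      * (Set.Ioc sj (sj+a)).indicator (1 : ℝ → ℝ) x
      = (Set.Ioc si (si+a) ∩ Set.Ioc sj (sj+a)).indicator 1 x := by
    intro x
    rw [← Set.inter_indicator_mul]
    simp [Set.indicator_apply]
  simp_rw [h]
  rw [integral_indicator_one (measurableSet_Ioc.inter measurableSet_Ioc),
    Set.Ioc_inter_Ioc, Real.volume_real_Ioc]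
  congr 1
  have h1 : (si + a) ⊓ (sj + a) = si ⊓ sj + a := by
    rcases le_total si sj with h | h <;> simp [min_eq_left, min_eq_right, h]
  rw [h1]
  have h2 : si ⊔ sj - si ⊓ sj = |sj - si| := max_sub_min_eq_abs si sj
  rw [abs_sub_comm si sj]
  linarith [h2]


lemma tri_integrable (a si sj : ℝ) :
    Integrable (fun x : ℝ => (Set.Ioc si (si + a)).indicator (1 : ℝ → ℝ) x
      * (Set.Ioc sj (sj + a)).indicator (1 : ℝ → ℝ) x) := by
  have h : (fun x : ℝ => (Set.Ioc si (si+a)).indicator (1 : ℝ → ℝ) x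
      * (Set.Ioc sj (sj+a)).indicator (1 : ℝ → ℝ) x)
      = (Set.Ioc si (si+a) ∩ Set.Ioc sj (sj+a)).indicator 1 := by
    funext x
    rw [← Set.inter_indicator_mul]
    simp [Set.indicator_apply]
  rw [h, integrable_indicator_iff (measurableSet_Ioc.inter measurableSet_Ioc)]
  exact integrableOn_const (lt_of_le_of_lt (measure_mono Set.inter_subset_left)
    (by rw [Real.volume_Ioc]; exact ENNReal.ofReal_lt_top)).ne

lemma integral_ofReal'' {X : Type*} [MeasurableSpace X] {μ : MeasureTheory.Measure X} (f : X → ℝ) :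
    ∫ x, ((f x : ℝ) : ℂ) ∂μ = ((∫ x, f x ∂μ : ℝ) : ℂ) :=
  integral_ofReal


lemma tri_posdef (a : ℝ) (N : ℕ) (t : Fin N → ℝ) (c : Fin N → ℂ) :
    0 ≤ ∑ i, ∑ j, (starRingEnd ℂ) (c i) * c j * ((max (a - |t i - t j|) 0 : ℝ) : ℂ) := by
  classical
  set g : Fin N → ℝ → ℝ := fun i => (Set.Ioc (t i) (t i + a)).indicator 1 with hg
  have key : (∑ i, ∑ j, (starRingEnd ℂ) (c i) * c j * ((max (a - |t i - t j|) 0 : ℝ) : ℂ))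
      = ∫ x : ℝ, (starRingEnd ℂ) (∑ i, c i * (g i x : ℂ)) * (∑ i, c i * (g i x : ℂ)) := by
    have hterm : ∀ x : ℝ, (starRingEnd ℂ) (∑ i, c i * (g i x : ℂ)) * (∑ i, c i * (g i x : ℂ))
        = ∑ i, ∑ j, (starRingEnd ℂ) (c i) * c j * ((g i x * g j x : ℝ) : ℂ) := by
      intro x
      rw [map_sum, Finset.sum_mul_sum]
      congr 1; funext i; congr 1; funext j
      simp only [_root_.map_mul, Complex.conj_ofReal, Complex.ofReal_mul]
      ring
    rw [MeasureTheory.integral_congr_ae (Filter.Eventually.of_forall hterm)]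
    rw [MeasureTheory.integral_finset_sum]
    · congr 1; funext i
      rw [MeasureTheory.integral_finset_sum]
      · congr 1; funext j
        have : ∀ x : ℝ, (starRingEnd ℂ) (c i) * c j * ((g i x * g j x : ℝ) : ℂ)
            = ((starRingEnd ℂ) (c i) * c j) * ((g i x * g j x : ℝ) : ℂ) := fun x => by ring
        rw [MeasureTheory.integral_congr_ae (Filter.Eventually.of_forall this),
          MeasureTheory.integral_const_mul, integral_ofReal'' , tri_integral]
      · intro j _
        exact ((tri_integrable a (t i) (t j)).ofReal.const_mul _)
    · intro i _
      apply MeasureTheory.integrable_finset_sum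
      intro j _
      exact ((tri_integrable a (t i) (t j)).ofReal.const_mul _)
  rw [key]
  have h1 : ∀ x : ℝ, (starRingEnd ℂ) (∑ i, c i * (g i x : ℂ)) * (∑ i, c i * (g i x : ℂ))
      = ((Complex.normSq (∑ i, c i * (g i x : ℂ)) : ℝ) : ℂ) := by
    intro x
    rw [← Complex.normSq_eq_conj_mul_self]
  rw [MeasureTheory.integral_congr_ae (Filter.Eventually.of_forall h1), integral_ofReal'']
  rw [Complex.zero_le_real]
  exact integral_nonneg (fun x => Complex.normSq_nonneg _)

lemma posSemidef_of_quadratic {K : ℕ} (M : Matrix (Fin K) (Fin K) ℝ)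
    (hs : Mᵀ = M) (h : ∀ x : Fin K → ℝ, 0 ≤ x ⬝ᵥ M *ᵥ x) : M.PosSemidef := by
  constructor
  · show Mᴴ = M
    ext i j
    simpa [Matrix.conjTranspose_apply] using congrFun (congrFun hs i) j
  · intro x
    have key := (posSemidef_iff_dotProduct_mulVec (M := M)).mpr ⟨by ext i j; simpa [Matrix.conjTranspose_apply] using congrFun (congrFun hs i) j, fun y => by simpa [star_trivial] using h y⟩
    exact key.2 x

lemma mixed_posdef {K N : ℕ} (Λ : Matrix (Fin K) (Fin K) ℝ) (hΛ : Λ.PosSemidef)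
    (φ : Fin N → Fin N → ℂ)
    (hφ : ∀ c : Fin N → ℂ, 0 ≤ ∑ i, ∑ j, (starRingEnd ℂ) (c i) * c j * φ i j)
    (z : Fin N → Fin K → ℂ) :
    0 ≤ ∑ i, ∑ j, φ i j * (star (z i) ⬝ᵥ (Λ.map Complex.ofReal) *ᵥ z j) := by
  obtain ⟨B, hB⟩ : ∃ B : Matrix (Fin K) (Fin K) ℝ, Λ = Bᴴ * B := by
    open scoped MatrixOrder in exact CStarAlgebra.nonneg_iff_eq_star_mul_self.mp hΛ.nonneg
  set C : Matrix (Fin K) (Fin K) ℂ := B.map Complex.ofReal with hC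
  have hmap : Λ.map Complex.ofReal = Cᴴ * C := by
    rw [hB]
    ext i j
    simp [Matrix.mul_apply, Matrix.map_apply, Matrix.conjTranspose_apply,
      Complex.conj_ofReal, Complex.ofReal_sum, Complex.ofReal_mul, hC]
  have hq : ∀ i j, star (z i) ⬝ᵥ (Λ.map Complex.ofReal) *ᵥ z j
      = ∑ r, (starRingEnd ℂ) ((C *ᵥ z i) r) * ((C *ᵥ z j) r) := by
    intro i j
    rw [hmap, ← Matrix.mulVec_mulVec, Matrix.dotProduct_mulVec, ← Matrix.star_mulVec]
    simp [dotProduct, Complex.star_def]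
  calc (0 : ℂ) ≤ ∑ r, ∑ i, ∑ j, (starRingEnd ℂ) ((C *ᵥ z i) r) * ((C *ᵥ z j) r) * φ i j := by
        apply Finset.sum_nonneg
        intro r _
        exact hφ (fun i => (C *ᵥ z i) r)
    _ = ∑ i, ∑ j, φ i j * (star (z i) ⬝ᵥ (Λ.map Complex.ofReal) *ᵥ z j) := by
        simp_rw [hq, Finset.mul_sum]
        rw [Finset.sum_comm]
        congr 1; funext i
        rw [Finset.sum_comm]
        congr 1; funext j
        congr 1; funext r
        ring

theorem convex_kernel_posDef {K : ℕ}
    (G : ℝ → Matrix (Fin K) (Fin K) ℝ)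
    (hsym : ∀ t : ℝ, 0 ≤ t → (G t)ᵀ = G t)
    (hnonneg : ∀ t : ℝ, 0 ≤ t → ∀ x : Fin K → ℝ, 0 ≤ x ⬝ᵥ (G t) *ᵥ x)
    (hmono : ∀ x : Fin K → ℝ, ∀ s t : ℝ, 0 ≤ s → s ≤ t →
      x ⬝ᵥ (G t) *ᵥ x ≤ x ⬝ᵥ (G s) *ᵥ x)
    (hconv : ∀ x : Fin K → ℝ, ConvexOn ℝ (Set.Ici (0 : ℝ)) (fun t => x ⬝ᵥ (G t) *ᵥ x)) :
    IsPosDefMatrixFun (fun t => (G |t|).map Complex.ofReal) := by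
  intro N t z
  classical
  rcases Nat.eq_zero_or_pos N with hN | hN
  · subst hN; simp
  simp only []
  -- the grid of distances
  set s : Finset ℝ := Finset.image (fun p : Fin N × Fin N => |t p.1 - t p.2|) Finset.univ
    with hs
  have hsne : s.Nonempty := by
    refine ⟨|t ⟨0, hN⟩ - t ⟨0, hN⟩|, ?_⟩
    rw [hs]
    exact Finset.mem_image.mpr ⟨(⟨0, hN⟩, ⟨0, hN⟩), Finset.mem_univ _, rfl⟩
  have hsnonneg : ∀ x ∈ s, (0 : ℝ) ≤ x := by
    intro x hx
    rw [hs] at hx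
    obtain ⟨p, -, rfl⟩ := Finset.mem_image.mp hx
    exact abs_nonneg _
  set m : ℕ := s.card - 1 with hm
  have hscard : s.card = m + 1 := by
    have := Finset.card_pos.mpr hsne
    omega
  set e : Fin (m + 1) ≃o {x // x ∈ s} := s.orderIsoOfFin hscard with he
  set u : ℕ → ℝ := fun k => if h : k < m + 1 then (e ⟨k, h⟩ : ℝ) else 0 with hu
  have hu_mono : ∀ k l : ℕ, k < l → l ≤ m → u k < u l := by
    intro k l hkl hl
    have hk' : k < m + 1 := by omega
    have hl' : l < m + 1 := by omega
    rw [hu]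
    simp only [dif_pos hk', dif_pos hl']
    exact_mod_cast e.strictMono (show (⟨k, hk'⟩ : Fin (m+1)) < ⟨l, hl'⟩ from hkl)
  have hu_le : ∀ k l : ℕ, k ≤ l → l ≤ m → u k ≤ u l := by
    intro k l hkl hl
    rcases eq_or_lt_of_le hkl with rfl | h
    · exact le_rfl
    · exact (hu_mono k l h hl).le
  have hu_nonneg : ∀ k : ℕ, k ≤ m → 0 ≤ u k := by
    intro k hk
    have hk' : k < m + 1 := by omega
    rw [hu]
    simp only [dif_pos hk']
    exact hsnonneg _ (e ⟨k, hk'⟩).2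
  have hu_mem : ∀ i j : Fin N, ∃ l : ℕ, l ≤ m ∧ u l = |t i - t j| := by
    intro i j
    have hmem : |t i - t j| ∈ s := by
      rw [hs]; exact Finset.mem_image.mpr ⟨(i, j), Finset.mem_univ _, rfl⟩
    refine ⟨(e.symm ⟨_, hmem⟩ : Fin (m+1)).1, by omega, ?_⟩
    rw [hu]
    simp only [dif_pos (e.symm ⟨_, hmem⟩).isLt, Fin.eta]
    rw [e.apply_symm_apply]
  -- slopes and second differences
  set S : ℕ → Matrix (Fin K) (Fin K) ℝ := fun k =>
    if 1 ≤ k ∧ k ≤ m then (u k - u (k-1))⁻¹ • (G (u k) - G (u (k-1))) else 0 with hS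
  set Λ : ℕ → Matrix (Fin K) (Fin K) ℝ := fun k => S (k+1) - S k with hΛ
  -- quadratic-form helpers
  have hq_sub : ∀ (A B : Matrix (Fin K) (Fin K) ℝ) (x : Fin K → ℝ),
      x ⬝ᵥ (A - B) *ᵥ x = x ⬝ᵥ A *ᵥ x - x ⬝ᵥ B *ᵥ x := by
    intro A B x
    rw [Matrix.sub_mulVec, dotProduct_sub]
  have hq_smul : ∀ (c : ℝ) (A : Matrix (Fin K) (Fin K) ℝ) (x : Fin K → ℝ),
      x ⬝ᵥ (c • A) *ᵥ x = c * (x ⬝ᵥ A *ᵥ x) := by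
    intro c A x
    rw [Matrix.smul_mulVec, dotProduct_smul, smul_eq_mul]
  -- symmetry of S
  have hSsym : ∀ k : ℕ, (S k)ᵀ = S k := by
    intro k
    rw [hS]
    by_cases h : 1 ≤ k ∧ k ≤ m
    · simp only [if_pos h, Matrix.transpose_smul, Matrix.transpose_sub]
      rw [hsym _ (hu_nonneg k h.2), hsym _ (hu_nonneg (k-1) (by omega))]
    · simp [if_neg h]
  have hStop : S (m + 1) = 0 := by
    rw [hS]
    simp only [if_neg (by omega : ¬(1 ≤ m + 1 ∧ m + 1 ≤ m))]
  -- positive semidefiniteness of the second differences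
  have hΛpsd : ∀ k : ℕ, k < m → (Λ (k+1)).PosSemidef := by
    intro k hk
    apply posSemidef_of_quadratic
    · rw [hΛ]
      simp only [Matrix.transpose_sub, hSsym]
    · intro x
      rw [hΛ]
      simp only [hq_sub]
      rcases eq_or_lt_of_le (show k + 1 ≤ m by omega) with hkm | hkm
      · -- k + 1 = m : use monotonicity
        have h2 : S (k + 1 + 1) = 0 := by rw [hkm]; exact hStop
        rw [h2]
        have hcond : 1 ≤ k + 1 ∧ k + 1 ≤ m := ⟨by omega, by omega⟩
        rw [hS]
        simp only [if_pos hcond, hq_smul, hq_sub]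
        have hzero : x ⬝ᵥ (0 : Matrix (Fin K) (Fin K) ℝ) *ᵥ x = 0 := by simp
        rw [hzero]
        have h1 : (k + 1) - 1 = k := by omega
        rw [h1]
        have hlt : u k < u (k+1) := hu_mono k (k+1) (by omega) (by omega)
        have hmle : x ⬝ᵥ G (u (k+1)) *ᵥ x ≤ x ⬝ᵥ G (u k) *ᵥ x :=
          hmono x (u k) (u (k+1)) (hu_nonneg k (by omega)) hlt.le
        have : (u (k+1) - u k)⁻¹ * (x ⬝ᵥ G (u (k+1)) *ᵥ x - x ⬝ᵥ G (u k) *ᵥ x) ≤ 0 :=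
          mul_nonpos_of_nonneg_of_nonpos (inv_nonneg.mpr (by linarith)) (by linarith)
        linarith
      · -- k + 1 < m : use convexity
        have hc1 : 1 ≤ k + 1 ∧ k + 1 ≤ m := ⟨by omega, by omega⟩
        have hc2 : 1 ≤ k + 2 ∧ k + 2 ≤ m := ⟨by omega, by omega⟩
        rw [hS]
        simp only [if_pos hc1, if_pos hc2, hq_smul, hq_sub]
        have h1 : (k + 1) - 1 = k := by omega
        have h2 : (k + 2) - 1 = k + 1 := by omega
        rw [h1, h2]
        have hlt1 : u k < u (k+1) := hu_mono k (k+1) (by omega) (by omega)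
        have hlt2 : u (k+1) < u (k+2) := hu_mono (k+1) (k+2) (by omega) (by omega)
        have hslope := (hconv x).slope_mono_adjacent
          (Set.mem_Ici.mpr (hu_nonneg k (by omega)))
          (Set.mem_Ici.mpr (hu_nonneg (k+2) (by omega))) hlt1 hlt2
        rw [div_le_div_iff₀ (by linarith) (by linarith)] at hslope
        have hA := sub_pos.mpr hlt1
        have hB := sub_pos.mpr hlt2
        rw [inv_mul_eq_div, inv_mul_eq_div, sub_nonneg, div_le_div_iff₀ hA hB]
        nlinarith [hslope]
  -- the decomposition identity
  have claim : ∀ d l : ℕ, l + d = m →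
      G (u l) = G (u m) + ∑ k ∈ Finset.range m, max (u (k+1) - u l) 0 • Λ (k+1) := by
    intro d
    induction d with
    | zero =>
      intro l hl
      have hl' : l = m := by omega
      subst hl'
      have hz : ∀ k ∈ Finset.range m, max (u (k+1) - u m) 0 • Λ (k+1) = 0 := by
        intro k hk
        rw [Finset.mem_range] at hk
        have : u (k+1) ≤ u m := hu_le (k+1) m (by omega) (by omega)
        rw [max_eq_right (by linarith), zero_smul]
      rw [Finset.sum_eq_zero hz, add_zero]
    | succ d ih =>
      intro l hl
      have hlm : l < m := by omega
      have IH := ih (l + 1) (by omega)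
      have hlt : u l < u (l+1) := hu_mono l (l+1) (by omega) (by omega)
      have hδ : u (l+1) - u l ≠ 0 := by linarith
      -- split each max
      have hsplit : ∀ k ∈ Finset.range m,
          max (u (k+1) - u l) 0 • Λ (k+1)
          = max (u (k+1) - u (l+1)) 0 • Λ (k+1)
            + (if l ≤ k then (u (l+1) - u l) • Λ (k+1) else 0) := by
        intro k hk
        rw [Finset.mem_range] at hk
        by_cases hlk : l ≤ k
        · have h1 : u (l+1) ≤ u (k+1) := hu_le (l+1) (k+1) (by omega) (by omega)
          rw [if_pos hlk, max_eq_left (by linarith), max_eq_left (by linarith), ← add_smul]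
          congr 1
          ring
        · have h1 : u (k+1) ≤ u l := hu_le (k+1) l (by omega) (by omega)
          rw [if_neg hlk, max_eq_right (by linarith), max_eq_right (by linarith), add_zero]
      rw [Finset.sum_congr rfl hsplit, Finset.sum_add_distrib]
      -- the second sum telescopes
      have hfilter : ∑ k ∈ Finset.range m, (if l ≤ k then (u (l+1) - u l) • Λ (k+1) else 0)
          = (u (l+1) - u l) • ∑ k ∈ Finset.Ico l m, Λ (k+1) := by
        rw [← Finset.sum_filter, Finset.smul_sum]
        have hset : Finset.filter (fun k => l ≤ k) (Finset.range m) = Finset.Ico l m := by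
          ext a
          simp only [Finset.mem_filter, Finset.mem_range, Finset.mem_Ico]
          omega
        rw [hset]
      have htel : ∑ k ∈ Finset.Ico l m, Λ (k+1) = S (m+1) - S (l+1) := by
        rw [Finset.sum_Ico_eq_sum_range]
        have : ∀ j, Λ (l + j + 1) = S (l + (j+1) + 1) - S (l + j + 1) := by
          intro j
          simp only [hΛ]
          have h' : l + j + 1 + 1 = l + (j + 1) + 1 := by omega
          rw [h']
        calc ∑ j ∈ Finset.range (m - l), Λ (l + j + 1)
            = ∑ j ∈ Finset.range (m - l), (S (l + (j+1) + 1) - S (l + j + 1)) := by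
              exact Finset.sum_congr rfl fun j _ => this j
          _ = S (l + (m - l) + 1) - S (l + 0 + 1) :=
              Finset.sum_range_sub (fun j => S (l + j + 1)) (m - l)
          _ = S (m + 1) - S (l + 1) := by
              have e1 : l + (m - l) + 1 = m + 1 := by omega
              have e2 : l + 0 + 1 = l + 1 := by omega
              rw [e1, e2]
      rw [hfilter, htel, hStop]
      -- now reduce to one step
      have hSl : S (l+1) = (u (l+1) - u l)⁻¹ • (G (u (l+1)) - G (u l)) := by
        rw [hS]
        simp only [if_pos (show 1 ≤ l + 1 ∧ l + 1 ≤ m from ⟨by omega, by omega⟩),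
          Nat.add_sub_cancel]
      rw [hSl]
      rw [zero_sub, smul_neg, smul_smul, mul_inv_cancel₀ hδ, one_smul]
      rw [← add_assoc, ← IH]
      abel
  -- apply the identity to each pair
  have hGij : ∀ i j : Fin N, G |t i - t j|
      = G (u m) + ∑ k ∈ Finset.range m, max (u (k+1) - |t i - t j|) 0 • Λ (k+1) := by
    intro i j
    obtain ⟨l, hl, hul⟩ := hu_mem i j
    rw [← hul]
    exact claim (m - l) l (by omega)
  -- matrix-map linearity helpers
  have hmap_add : ∀ (A B : Matrix (Fin K) (Fin K) ℝ),
      (A + B).map Complex.ofReal = A.map Complex.ofReal + B.map Complex.ofReal := by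
    intro A B; ext i j; simp [Matrix.map_apply]
  have hmap_sum : ∀ (T : Finset ℕ) (F : ℕ → Matrix (Fin K) (Fin K) ℝ),
      ((∑ k ∈ T, F k).map Complex.ofReal) = ∑ k ∈ T, (F k).map Complex.ofReal := by
    intro T F; ext i j
    simp [Matrix.map_apply, Matrix.sum_apply, Complex.ofReal_sum]
  have hmap_smul : ∀ (c : ℝ) (A : Matrix (Fin K) (Fin K) ℝ),
      ((c • A).map Complex.ofReal) = (c : ℂ) • A.map Complex.ofReal := by
    intro c A; ext i j; simp [Matrix.map_apply]
  have hdot_sum : ∀ (T : Finset ℕ) (F : ℕ → Matrix (Fin K) (Fin K) ℂ) (v w : Fin K → ℂ),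
      v ⬝ᵥ (∑ k ∈ T, F k) *ᵥ w = ∑ k ∈ T, v ⬝ᵥ (F k) *ᵥ w := by
    intro T F v w
    induction T using Finset.cons_induction with
    | empty => simp
    | cons a T ha ih => simp [Finset.sum_insert ha, Matrix.add_mulVec, dotProduct_add, ih]
  -- expand the big sum
  have hexp : ∀ i j : Fin N,
      star (z i) ⬝ᵥ ((G |t i - t j|).map Complex.ofReal) *ᵥ z j
      = star (z i) ⬝ᵥ ((G (u m)).map Complex.ofReal) *ᵥ z j
        + ∑ k ∈ Finset.range m, ((max (u (k+1) - |t i - t j|) 0 : ℝ) : ℂ)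
            * (star (z i) ⬝ᵥ ((Λ (k+1)).map Complex.ofReal) *ᵥ z j) := by
    intro i j
    rw [hGij i j, hmap_add, hmap_sum, Matrix.add_mulVec, dotProduct_add]
    congr 1
    rw [hdot_sum]
    refine Finset.sum_congr rfl fun k _ => ?_
    rw [hmap_smul, Matrix.smul_mulVec, dotProduct_smul, smul_eq_mul]
  have hCpsd : (G (u m)).PosSemidef :=
    posSemidef_of_quadratic _ (hsym _ (hu_nonneg m le_rfl))
      (fun x => hnonneg _ (hu_nonneg m le_rfl) x)
  have hone : ∀ c : Fin N → ℂ,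
      0 ≤ ∑ i, ∑ j, (starRingEnd ℂ) (c i) * c j * (1 : ℂ) := by
    intro c
    have h1 : ∑ i, ∑ j, (starRingEnd ℂ) (c i) * c j * (1 : ℂ)
        = star (∑ i, c i) * ∑ i, c i := by
      simp only [mul_one]
      rw [star_sum]
      rw [Finset.sum_mul_sum]
      simp [Complex.star_def]
    rw [h1]
    exact star_mul_self_nonneg _
  have htotal : ∑ i, ∑ j, (star (z i) ⬝ᵥ ((G |t i - t j|).map Complex.ofReal) *ᵥ z j)
      = (∑ i, ∑ j, ((1 : ℂ) * (star (z i) ⬝ᵥ ((G (u m)).map Complex.ofReal) *ᵥ z j)))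
        + ∑ k ∈ Finset.range m, ∑ i, ∑ j,
            ((max (u (k+1) - |t i - t j|) 0 : ℝ) : ℂ)
              * (star (z i) ⬝ᵥ ((Λ (k+1)).map Complex.ofReal) *ᵥ z j) := by
    simp_rw [hexp, one_mul, Finset.sum_add_distrib]
    congr 1
    have h1 : ∀ i : Fin N, ∑ j : Fin N, ∑ k ∈ Finset.range m,
        ((max (u (k+1) - |t i - t j|) 0 : ℝ) : ℂ)
          * (star (z i) ⬝ᵥ ((Λ (k+1)).map Complex.ofReal) *ᵥ z j)
        = ∑ k ∈ Finset.range m, ∑ j : Fin N,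
        ((max (u (k+1) - |t i - t j|) 0 : ℝ) : ℂ)
          * (star (z i) ⬝ᵥ ((Λ (k+1)).map Complex.ofReal) *ᵥ z j) := fun i => Finset.sum_comm
    rw [Finset.sum_congr rfl (fun i _ => h1 i), Finset.sum_comm]
  rw [htotal]
  apply add_nonneg
  · exact mixed_posdef (G (u m)) hCpsd (fun _ _ => 1) hone z
  · apply Finset.sum_nonneg
    intro k hk
    exact mixed_posdef (Λ (k+1)) (hΛpsd k (Finset.mem_range.mp hk))
      (fun i j => ((max (u (k+1) - |t i - t j|) 0 : ℝ) : ℂ))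
      (fun c => tri_posdef (u (k+1)) N t c) z
end

section
/- Let G : [0,∞) → ℝ^{K×K} be symmetric, nonnegative, nonincreasing, and convex. Then t ↦ G(|t|) is strictly positive definite if and only if for each nonzero x ∈ ℝ^K the function t ↦ x^⊤ G(t) x is nonconstant. -/
open Matrix BigOperators
open scoped ComplexOrder

/-- `H` is a strictly positive definite matrix-valued function: for distinct times,
the quadratic sum is nonnegative and vanishes only for zero vectors. -/
def IsStrictPosDefMatrixFun {K : ℕ} (H : ℝ → Matrix (Fin K) (Fin K) ℂ) : Prop :=
  ∀ (N : ℕ) (t : Fin N → ℝ) (z : Fin N → (Fin K → ℂ)), Function.Injective t →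
    0 ≤ ∑ i, ∑ j, star (z i) ⬝ᵥ (H (t i - t j)) *ᵥ (z j) ∧
      ((∑ i, ∑ j, star (z i) ⬝ᵥ (H (t i - t j)) *ᵥ (z j)) = 0 → ∀ i, z i = 0)

open Matrix BigOperators MeasureTheory
open scoped ComplexOrder


open Matrix BigOperators MeasureTheory
open scoped ComplexOrder

noncomputable section

private lemma ind_mul_ind (a b s : ℝ) (wa wb : ℂ) :
    (fun u => ((Set.Ico a (a+s)).indicator (fun _ => wa) u) *
         ((Set.Ico b (b+s)).indicator (fun _ => wb) u))
      = (Set.Ico (max a b) (min (a+s) (b+s))).indicator (fun _ => wa * wb) := by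
  funext u
  have : Set.Ico (max a b) (min (a+s) (b+s)) = Set.Ico a (a+s) ∩ Set.Ico b (b+s) := by
    rw [Set.Ico_inter_Ico]
  rw [this]
  by_cases ha : u ∈ Set.Ico a (a+s) <;> by_cases hb : u ∈ Set.Ico b (b+s) <;>
    simp [Set.indicator_apply, ha, hb, Set.mem_inter_iff]

private lemma vol_ico (a b s : ℝ) :
    (volume (Set.Ico (max a b) (min (a+s) (b+s)))).toReal = max (s - |a - b|) 0 := by
  rw [Real.volume_Ico, ENNReal.toReal_ofReal']
  congr 1
  have h1 : min (a+s) (b+s) = min a b + s := by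
    rcases le_total a b with h | h <;> simp [min_def, h]
  have h2 : |a - b| = max a b - min a b := by
    rw [max_sub_min_eq_abs, abs_sub_comm]
  rw [h1, h2]; ring

private lemma tent_int (a b s : ℝ) (wa wb : ℂ) :
    ∫ u, ((Set.Ico a (a+s)).indicator (fun _ => wa) u) *
         ((Set.Ico b (b+s)).indicator (fun _ => wb) u)
      = ((max (s - |a - b|) 0 : ℝ) : ℂ) * (wa * wb) := by
  rw [ind_mul_ind, integral_indicator_const _ measurableSet_Ico, measureReal_def, vol_ico]
  rw [Complex.real_smul]

private lemma tent_int_integrable (a b s : ℝ) (wa wb : ℂ) :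
    Integrable (fun u => ((Set.Ico a (a+s)).indicator (fun _ => wa) u) *
         ((Set.Ico b (b+s)).indicator (fun _ => wb) u)) := by
  rw [ind_mul_ind]
  rw [integrable_indicator_iff measurableSet_Ico]
  exact integrableOn_const (by rw [Real.volume_Ico]; exact ENNReal.ofReal_ne_top)

end

noncomputable section
private lemma tent_sum_eq {N : ℕ} (s : ℝ) (t : Fin N → ℝ) (w : Fin N → ℂ) :
    ∑ i, ∑ j, ((max (s - |t i - t j|) 0 : ℝ) : ℂ) * ((starRingEnd ℂ) (w i) * w j)
      = ((∫ u, Complex.normSq (∑ i, (Set.Ico (t i) (t i + s)).indicator (fun _ => w i) u) : ℝ) : ℂ) := by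
  set f : Fin N → ℝ → ℂ := fun i u => (Set.Ico (t i) (t i + s)).indicator (fun _ => w i) u with hf
  have hrw : ∀ i j : Fin N, (fun u => (starRingEnd ℂ) (f i u) * f j u)
      = fun u => ((Set.Ico (t i) (t i + s)).indicator (fun _ => (starRingEnd ℂ) (w i)) u)
          * ((Set.Ico (t j) (t j + s)).indicator (fun _ => w j) u) := by
    intro i j; funext u; simp only [hf]
    by_cases h : u ∈ Set.Ico (t i) (t i + s) <;> simp [Set.indicator_apply, h]
  have gint : ∀ i j : Fin N, Integrable (fun u => (starRingEnd ℂ) (f i u) * f j u) := by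
    intro i j; rw [hrw]; exact tent_int_integrable _ _ _ _ _
  have key : ∀ i j : Fin N, ((max (s - |t i - t j|) 0 : ℝ) : ℂ) * ((starRingEnd ℂ) (w i) * w j)
      = ∫ u, (starRingEnd ℂ) (f i u) * f j u := by
    intro i j; rw [hrw i j, tent_int]
  calc ∑ i, ∑ j, ((max (s - |t i - t j|) 0 : ℝ) : ℂ) * ((starRingEnd ℂ) (w i) * w j)
      = ∑ i, ∑ j, ∫ u, (starRingEnd ℂ) (f i u) * f j u :=
        Finset.sum_congr rfl fun i _ => Finset.sum_congr rfl fun j _ => key i j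
    _ = ∑ i : Fin N, ∫ u, ∑ j, (starRingEnd ℂ) (f i u) * f j u :=
        Finset.sum_congr rfl fun i _ => (integral_finset_sum _ fun j _ => gint i j).symm
    _ = ∫ u, ∑ i, ∑ j, (starRingEnd ℂ) (f i u) * f j u :=
        (integral_finset_sum _ fun i _ => integrable_finset_sum _ fun j _ => gint i j).symm
    _ = ∫ u, ((Complex.normSq (∑ i, f i u) : ℝ) : ℂ) := by
        congr 1; funext u
        rw [Complex.normSq_eq_conj_mul_self, map_sum, Finset.sum_mul_sum]
    _ = ((∫ u, Complex.normSq (∑ i, f i u) : ℝ) : ℂ) := integral_ofReal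

private lemma tent_nonneg {N : ℕ} (s : ℝ) (t : Fin N → ℝ) (w : Fin N → ℂ) :
    0 ≤ ∑ i, ∑ j, ((max (s - |t i - t j|) 0 : ℝ) : ℂ) * ((starRingEnd ℂ) (w i) * w j) := by
  rw [tent_sum_eq, Complex.zero_le_real]
  exact integral_nonneg fun u => Complex.normSq_nonneg _
end

noncomputable section
private lemma ind_sum_ae_zero {N : ℕ} (s : ℝ) (hs : 0 < s) (t : Fin N → ℝ)
    (ht : Function.Injective t) (w : Fin N → ℂ) (A : Finset (Fin N)) :
    (fun u => ∑ i ∈ A, (Set.Ico (t i) (t i + s)).indicator (fun _ => w i) u) =ᵐ[volume] 0 →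
    ∀ i ∈ A, w i = 0 := by
  induction A using Finset.strongInduction with
  | _ A ih =>
    intro hA i hiA
    have hAne : A.Nonempty := ⟨i, hiA⟩
    obtain ⟨i0, hi0A, hmin⟩ := A.exists_min_image t hAne
    set B := A.erase i0 with hBdef
    have hb : ∃ b : ℝ, t i0 < b ∧ b ≤ t i0 + s ∧ ∀ j ∈ B, b ≤ t j := by
      rcases B.eq_empty_or_nonempty with hBe | hBne
      · exact ⟨t i0 + s, by linarith, le_refl _, by simp [hBe]⟩
      · refine ⟨min (t i0 + s) (B.inf' hBne t), ?_, min_le_left _ _, ?_⟩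
        · refine lt_min (by linarith) ?_
          obtain ⟨j, hjB, hj⟩ := Finset.exists_mem_eq_inf' hBne t
          rw [hj]
          rcases Finset.mem_erase.1 hjB with ⟨hne, hjA⟩
          exact lt_of_le_of_ne (hmin j hjA) fun he => hne (ht he).symm
        · exact fun j hjB => le_trans (min_le_right _ _) (Finset.inf'_le t hjB)
    obtain ⟨b, hb1, hb2, hb3⟩ := hb
    have hpw : ∀ u ∈ Set.Ico (t i0) b,
        (∑ j ∈ A, (Set.Ico (t j) (t j + s)).indicator (fun _ => w j) u) = w i0 := by
      intro u hu
      rw [← Finset.sum_erase_add _ _ hi0A]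
      have h1 : ∀ j ∈ B, (Set.Ico (t j) (t j + s)).indicator (fun _ => w j) u = 0 := by
        intro j hjB
        exact Set.indicator_of_notMem
          (fun hu2 => absurd hu2.1 (not_le.2 (lt_of_lt_of_le hu.2 (hb3 j hjB)))) _
      rw [Finset.sum_eq_zero h1, zero_add]
      exact Set.indicator_of_mem (Set.mem_Ico.2 ⟨hu.1, lt_of_lt_of_le hu.2 hb2⟩) _
    have hw0 : w i0 = 0 := by
      by_contra hw
      have hsub : Set.Ico (t i0) b ⊆
          {u : ℝ | ¬ ((∑ j ∈ A, (Set.Ico (t j) (t j + s)).indicator (fun _ => w j) u) = (0 : ℝ → ℂ) u)} := by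
        intro u hu
        simp only [Set.mem_setOf_eq, hpw u hu, Pi.zero_apply]
        exact hw
      have hnull : volume (Set.Ico (t i0) b) = 0 := measure_mono_null hsub (ae_iff.1 hA)
      rw [Real.volume_Ico, ENNReal.ofReal_eq_zero] at hnull
      linarith
    rcases eq_or_ne i i0 with rfl | hne
    · exact hw0
    · have hiB : i ∈ B := Finset.mem_erase.2 ⟨hne, hiA⟩
      have hBA : B ⊂ A := Finset.erase_ssubset hi0A
      have heq : (fun u => ∑ j ∈ B, (Set.Ico (t j) (t j + s)).indicator (fun _ => w j) u)
          = fun u => ∑ j ∈ A, (Set.Ico (t j) (t j + s)).indicator (fun _ => w j) u := by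
        funext u
        rw [← Finset.sum_erase_add _ _ hi0A, hw0]
        simp
        rw [hBdef]
      exact ih B hBA (heq ▸ hA) i hiB

private lemma tent_strict {N : ℕ} (s : ℝ) (hs : 0 < s) (t : Fin N → ℝ)
    (ht : Function.Injective t) (w : Fin N → ℂ)
    (h0 : ∑ i, ∑ j, ((max (s - |t i - t j|) 0 : ℝ) : ℂ) * ((starRingEnd ℂ) (w i) * w j) = 0) :
    ∀ i, w i = 0 := by
  rw [tent_sum_eq, Complex.ofReal_eq_zero] at h0
  set f : Fin N → ℝ → ℂ := fun i u => (Set.Ico (t i) (t i + s)).indicator (fun _ => w i) u with hf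
  set F : ℝ → ℂ := fun u => ∑ i, f i u with hF
  have hrw : ∀ i j : Fin N, (fun u => (starRingEnd ℂ) (f i u) * f j u)
      = fun u => ((Set.Ico (t i) (t i + s)).indicator (fun _ => (starRingEnd ℂ) (w i)) u)
          * ((Set.Ico (t j) (t j + s)).indicator (fun _ => w j) u) := by
    intro i j; funext u; simp only [hf]
    by_cases h : u ∈ Set.Ico (t i) (t i + s) <;> simp [Set.indicator_apply, h]
  have hFint : Integrable (fun u => (starRingEnd ℂ) (F u) * F u) := by
    have : (fun u => (starRingEnd ℂ) (F u) * F u)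
        = fun u => ∑ i, ∑ j, (starRingEnd ℂ) (f i u) * f j u := by
      funext u; rw [hF]; rw [map_sum, Finset.sum_mul_sum]
    rw [this]
    exact integrable_finset_sum _ fun i _ => integrable_finset_sum _ fun j _ => by
      rw [hrw]; exact tent_int_integrable _ _ _ _ _
  have hnsqint : Integrable (fun u => Complex.normSq (F u)) := by
    have : (fun u => Complex.normSq (F u)) = fun u => ((starRingEnd ℂ) (F u) * F u).re := by
      funext u; rw [← Complex.normSq_eq_conj_mul_self, Complex.ofReal_re]
    rw [this]
    exact hFint.re
  have hae : (fun u => Complex.normSq (F u)) =ᵐ[volume] 0 :=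
    (integral_eq_zero_iff_of_nonneg (fun u => Complex.normSq_nonneg _) hnsqint).1 h0
  have hae2 : F =ᵐ[volume] 0 := by
    filter_upwards [hae] with u hu
    simpa using Complex.normSq_eq_zero.1 (by simpa using hu)
  exact fun i => ind_sum_ae_zero s hs t ht w Finset.univ hae2 i (Finset.mem_univ i)
end

noncomputable section
private lemma d_mono (m : ℕ) (d : ℕ → ℝ) (hd : ∀ k, 1 ≤ k → k ≤ m → d (k-1) < d k) :
    ∀ p q, p ≤ q → q ≤ m → d p ≤ d q := by
  intro p q hpq
  induction q, hpq using Nat.le_induction with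
  | base => intro _; exact le_rfl
  | succ q hq ih =>
    intro h
    exact le_trans (ih (by omega)) (le_of_lt (by simpa using hd (q+1) (by omega) h))

private def Sl (m : ℕ) (d g : ℕ → ℝ) (k : ℕ) : ℝ :=
  if 1 ≤ k ∧ k ≤ m then (g k - g (k-1)) * (d k - d (k-1))⁻¹ else 0

private lemma seq_decomp (m : ℕ) (d : ℕ → ℝ) (hd : ∀ k, 1 ≤ k → k ≤ m → d (k-1) < d k)
    (g : ℕ → ℝ) :
    ∀ j l, l + j = m →
      g l = g m + ∑ k ∈ Finset.range m,
        (Sl m d g (k+2) - Sl m d g (k+1)) * max (d (k+1) - d l) 0 := by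
  have hmono := d_mono m d hd
  intro j
  induction j with
  | zero =>
    intro l hl
    have hlm : l = m := by omega
    subst hlm
    have hz : ∀ k ∈ Finset.range l, (Sl l d g (k+2) - Sl l d g (k+1)) * max (d (k+1) - d l) 0 = 0 := by
      intro k hk
      rw [Finset.mem_range] at hk
      have : max (d (k+1) - d l) 0 = 0 :=
        max_eq_right (by have := hmono (k+1) l (by omega) le_rfl; linarith)
      rw [this, mul_zero]
    rw [Finset.sum_eq_zero hz, add_zero]
  | succ j ih =>
    intro l hl
    have hIH := ih (l+1) (by omega)
    have hlm : l + 1 ≤ m := by omega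
    have hdl : d l < d (l+1) := by simpa using hd (l+1) (by omega) hlm
    have hdiff : ∑ k ∈ Finset.range m, (Sl m d g (k+2) - Sl m d g (k+1)) * max (d (k+1) - d l) 0
        - ∑ k ∈ Finset.range m, (Sl m d g (k+2) - Sl m d g (k+1)) * max (d (k+1) - d (l+1)) 0
        = g l - g (l+1) := by
      rw [← Finset.sum_sub_distrib]
      have hterm : ∀ k ∈ Finset.range m,
          (Sl m d g (k+2) - Sl m d g (k+1)) * max (d (k+1) - d l) 0
            - (Sl m d g (k+2) - Sl m d g (k+1)) * max (d (k+1) - d (l+1)) 0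
          = if l ≤ k then (Sl m d g (k+2) - Sl m d g (k+1)) * (d (l+1) - d l) else 0 := by
        intro k hk
        rw [Finset.mem_range] at hk
        by_cases hlk : l ≤ k
        · have h1 : d (l+1) ≤ d (k+1) := hmono (l+1) (k+1) (by omega) (by omega)
          have h0 : d l ≤ d (k+1) := le_trans (le_of_lt hdl) h1
          rw [if_pos hlk, max_eq_left (by linarith), max_eq_left (by linarith)]
          ring
        · have h1 : d (k+1) ≤ d l := hmono (k+1) l (by omega) (by omega)
          have h2 : d (k+1) ≤ d (l+1) := le_trans h1 (le_of_lt hdl)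
          rw [if_neg hlk, max_eq_right (by linarith), max_eq_right (by linarith)]
          ring
      rw [Finset.sum_congr rfl hterm, Finset.sum_ite, Finset.sum_const_zero, add_zero]
      have hfilt : (Finset.range m).filter (fun k => l ≤ k) = Finset.Ico l m := by
        ext k; simp [Finset.mem_filter, Finset.mem_range, Finset.mem_Ico, and_comm]
      rw [hfilt, Finset.sum_Ico_eq_sum_range]
      have hre : ∀ r ∈ Finset.range (m - l),
          (Sl m d g (l + r + 2) - Sl m d g (l + r + 1)) * (d (l+1) - d l)
          = ((fun r => Sl m d g (l + 1 + r) * (d (l+1) - d l)) (r+1)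
              - (fun r => Sl m d g (l+1+r) * (d (l+1) - d l)) r) := by
        intro r _
        simp only []
        have e1 : l + r + 2 = l + 1 + (r + 1) := by omega
        have e2 : l + r + 1 = l + 1 + r := by omega
        rw [e1, e2]; ring
      rw [Finset.sum_congr rfl hre,
        Finset.sum_range_sub (fun r => Sl m d g (l + 1 + r) * (d (l + 1) - d l)) (m - l)]
      have e3 : l + 1 + (m - l) = m + 1 := by omega
      rw [e3]
      have hS1 : Sl m d g (m+1) = 0 := by
        unfold Sl; rw [if_neg (by omega : ¬(1 ≤ m+1 ∧ m+1 ≤ m))]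
      have hS2 : Sl m d g (l+1) = (g (l+1) - g l) * (d (l+1) - d l)⁻¹ := by
        unfold Sl; rw [if_pos ⟨by omega, hlm⟩]; simp
      have hne : d (l + 1) - d l ≠ 0 := ne_of_gt (by linarith)
      rw [hS1, hS2, zero_mul]
      field_simp
      ring
    linarith [hIH, hdiff]
end

noncomputable section
open scoped MatrixOrder in
private lemma psd_sqrt_aux {𝕜 : Type*} [RCLike 𝕜] {n : Type*} [Fintype n] [DecidableEq n]
    {A : Matrix n n 𝕜} (hA : A.PosSemidef) : ∃ B : Matrix n n 𝕜, Bᴴ = B ∧ B * B = A :=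
  ⟨CFC.sqrt A, (CFC.sqrt_nonneg A).posSemidef.1, CFC.sqrt_mul_sqrt_self A hA.nonneg⟩

private lemma psd_map {K : ℕ} (M : Matrix (Fin K) (Fin K) ℝ) (hM : M.PosSemidef) :
    (M.map Complex.ofReal).PosSemidef := by
  obtain ⟨B, hBH, hBB⟩ := psd_sqrt_aux hM
  have hmap : M.map Complex.ofReal = (B.map Complex.ofReal)ᴴ * (B.map Complex.ofReal) := by
    have hsB : ∀ p q, B q p = B p q := by
      intro p q
      have := congrFun (congrFun hBH p) q
      simpa [Matrix.conjTranspose_apply] using this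
    have h1 : (B.map Complex.ofReal)ᴴ = B.map Complex.ofReal := by
      ext p q
      simp [Matrix.conjTranspose_apply, Matrix.map_apply, Complex.conj_ofReal, hsB p q]
    rw [h1, ← hBB]
    exact Matrix.map_mul (f := Complex.ofRealHom)
  rw [hmap]
  exact Matrix.posSemidef_conjTranspose_mul_self _

private lemma psd_of_real {K : ℕ} (M : Matrix (Fin K) (Fin K) ℝ)
    (hsym : Mᵀ = M) (hq : ∀ x : Fin K → ℝ, 0 ≤ x ⬝ᵥ M *ᵥ x) : M.PosSemidef := by
  refine Matrix.PosSemidef.of_dotProduct_mulVec_nonneg ?_ ?_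
  · rw [Matrix.IsHermitian, Matrix.conjTranspose_eq_transpose_of_trivial, hsym]
  · intro x
    simpa using hq x

private lemma tent_psd_matrix {N K : ℕ} (s : ℝ) (C : Matrix (Fin K) (Fin K) ℂ)
    (hC : C.PosSemidef) (t : Fin N → ℝ) (z : Fin N → Fin K → ℂ) :
    0 ≤ ∑ i, ∑ j, ((max (s - |t i - t j|) 0 : ℝ) : ℂ) * (star (z i) ⬝ᵥ C *ᵥ z j) ∧
      (0 < s → Function.Injective t →
        (∑ i, ∑ j, ((max (s - |t i - t j|) 0 : ℝ) : ℂ) * (star (z i) ⬝ᵥ C *ᵥ z j)) = 0 →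
        ∀ i, C *ᵥ z i = 0) := by
  obtain ⟨B, hBH, hBB⟩ := psd_sqrt_aux hC
  have key : ∀ i j, star (z i) ⬝ᵥ C *ᵥ z j
      = ∑ c, (starRingEnd ℂ) ((B *ᵥ z i) c) * ((B *ᵥ z j) c) := by
    intro i j
    have h1 : star (z i) ⬝ᵥ C *ᵥ z j = star (B *ᵥ z i) ⬝ᵥ (B *ᵥ z j) := by
      rw [Matrix.star_mulVec, ← Matrix.dotProduct_mulVec, hBH, Matrix.mulVec_mulVec, hBB]
    rw [h1]
    simp [dotProduct]
  have hswap : ∑ i, ∑ j, ((max (s - |t i - t j|) 0 : ℝ) : ℂ) * (star (z i) ⬝ᵥ C *ᵥ z j)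
      = ∑ c : Fin K, ∑ i, ∑ j, ((max (s - |t i - t j|) 0 : ℝ) : ℂ) *
          ((starRingEnd ℂ) ((B *ᵥ z i) c) * ((B *ᵥ z j) c)) := by
    have hterm : ∀ i j, ((max (s - |t i - t j|) 0 : ℝ) : ℂ) * (star (z i) ⬝ᵥ C *ᵥ z j)
        = ∑ c : Fin K, ((max (s - |t i - t j|) 0 : ℝ) : ℂ) *
            ((starRingEnd ℂ) ((B *ᵥ z i) c) * ((B *ᵥ z j) c)) := by
      intro i j; rw [key, Finset.mul_sum]
    simp_rw [hterm]
    exact (Finset.sum_congr rfl fun i _ => Finset.sum_comm).trans Finset.sum_comm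
  constructor
  · rw [hswap]
    exact Finset.sum_nonneg fun c _ => tent_nonneg s t (fun i => (B *ᵥ z i) c)
  · intro hs ht h0 i
    rw [hswap] at h0
    have hz : ∀ c : Fin K, ∀ i, (B *ᵥ z i) c = 0 := by
      intro c
      have hc0 : ∑ i, ∑ j, ((max (s - |t i - t j|) 0 : ℝ) : ℂ) *
          ((starRingEnd ℂ) ((B *ᵥ z i) c) * ((B *ᵥ z j) c)) = 0 := by
        have := (Finset.sum_eq_zero_iff_of_nonneg
          (fun c _ => tent_nonneg s t (fun i => (B *ᵥ z i) c))).1 h0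
        exact this c (Finset.mem_univ c)
      exact tent_strict s hs t ht _ hc0
    have hBz : B *ᵥ z i = 0 := by
      funext c; exact hz c i
    rw [← hBB, ← Matrix.mulVec_mulVec, hBz, Matrix.mulVec_zero]
end

noncomputable section
private lemma dotmap {K : ℕ} (z w : Fin K → ℂ) (M : Matrix (Fin K) (Fin K) ℝ) :
    star z ⬝ᵥ (M.map Complex.ofReal) *ᵥ w
      = ∑ p, ∑ q, ((M p q : ℝ) : ℂ) * ((starRingEnd ℂ) (z p) * w q) := by
  simp only [dotProduct, Matrix.mulVec, Matrix.map_apply, Pi.star_apply, Finset.mul_sum,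
    starRingEnd_apply]
  exact Finset.sum_congr rfl fun p _ => Finset.sum_congr rfl fun q _ => by ring

private lemma contract_decomp {K : ℕ} (z w : Fin K → ℂ) (A B : Matrix (Fin K) (Fin K) ℝ)
    (mm : ℕ) (coeff : ℕ → ℝ) (Cs : ℕ → Matrix (Fin K) (Fin K) ℝ)
    (h : ∀ p q, A p q = B p q + ∑ k ∈ Finset.range mm, coeff k * Cs k p q) :
    star z ⬝ᵥ (A.map Complex.ofReal) *ᵥ w
      = star z ⬝ᵥ (B.map Complex.ofReal) *ᵥ w
        + ∑ k ∈ Finset.range mm, ((coeff k : ℝ) : ℂ)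
            * (star z ⬝ᵥ ((Cs k).map Complex.ofReal) *ᵥ w) := by
  have hCk : ∀ k, ((coeff k : ℝ) : ℂ) * (star z ⬝ᵥ ((Cs k).map Complex.ofReal) *ᵥ w)
      = ∑ p, ∑ q, ((coeff k : ℝ) : ℂ) * (Cs k p q : ℂ) * ((starRingEnd ℂ) (z p) * w q) := by
    intro k
    rw [dotmap, Finset.mul_sum]
    refine Finset.sum_congr rfl fun p _ => ?_
    rw [Finset.mul_sum]
    exact Finset.sum_congr rfl fun q _ => by ring
  rw [dotmap, dotmap]
  simp_rw [hCk]
  have hA : ∀ p q, ((A p q : ℝ) : ℂ)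
      = (B p q : ℂ) + ∑ k ∈ Finset.range mm, ((coeff k : ℝ) : ℂ) * (Cs k p q : ℂ) := by
    intro p q
    rw [h p q]
    push_cast
    ring
  simp_rw [hA, add_mul, Finset.sum_mul, Finset.sum_add_distrib]
  congr 1
  exact (Finset.sum_congr rfl fun p _ => Finset.sum_comm).trans Finset.sum_comm

private lemma const_psd_sum {N K : ℕ} (C : Matrix (Fin K) (Fin K) ℂ) (hC : C.PosSemidef)
    (z : Fin N → Fin K → ℂ) :
    0 ≤ ∑ i, ∑ j, star (z i) ⬝ᵥ C *ᵥ z j := by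
  obtain ⟨B, hBH, hBB⟩ := psd_sqrt_aux hC
  have key : ∀ i j, star (z i) ⬝ᵥ C *ᵥ z j
      = ∑ c, (starRingEnd ℂ) ((B *ᵥ z i) c) * ((B *ᵥ z j) c) := by
    intro i j
    have h1 : star (z i) ⬝ᵥ C *ᵥ z j = star (B *ᵥ z i) ⬝ᵥ (B *ᵥ z j) := by
      rw [Matrix.star_mulVec, ← Matrix.dotProduct_mulVec, hBH, Matrix.mulVec_mulVec, hBB]
    rw [h1]
    simp [dotProduct]
  simp_rw [key]
  rw [(Finset.sum_congr rfl fun i _ => Finset.sum_comm).trans Finset.sum_comm]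
  refine Finset.sum_nonneg fun c _ => ?_
  have : ∑ i, ∑ j, (starRingEnd ℂ) ((B *ᵥ z i) c) * ((B *ᵥ z j) c)
      = ((Complex.normSq (∑ i, (B *ᵥ z i) c) : ℝ) : ℂ) := by
    rw [Complex.normSq_eq_conj_mul_self, map_sum, Finset.sum_mul_sum]
  rw [this, Complex.zero_le_real]
  exact Complex.normSq_nonneg _
end

noncomputable section
set_option maxHeartbeats 1000000 in
private lemma core {K N : ℕ} (G : ℝ → Matrix (Fin K) (Fin K) ℝ)
    (hsym : ∀ t : ℝ, 0 ≤ t → (G t)ᵀ = G t)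
    (hnonneg : ∀ t : ℝ, 0 ≤ t → ∀ x : Fin K → ℝ, 0 ≤ x ⬝ᵥ (G t) *ᵥ x)
    (hmono : ∀ x : Fin K → ℝ, ∀ s t : ℝ, 0 ≤ s → s ≤ t →
      x ⬝ᵥ (G t) *ᵥ x ≤ x ⬝ᵥ (G s) *ᵥ x)
    (hconv : ∀ x : Fin K → ℝ, ConvexOn ℝ (Set.Ici (0 : ℝ)) (fun t => x ⬝ᵥ (G t) *ᵥ x))
    (t : Fin N → ℝ) (z : Fin N → Fin K → ℂ)
    (D : Finset ℝ) (hDne : D.Nonempty) (hD0 : ∀ r ∈ D, 0 ≤ r)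
    (hDd : ∀ i j, |t i - t j| ∈ D) :
    0 ≤ ∑ i, ∑ j, star (z i) ⬝ᵥ ((G |t i - t j|).map Complex.ofReal) *ᵥ z j ∧
      (Function.Injective t →
       (∑ i, ∑ j, star (z i) ⬝ᵥ ((G |t i - t j|).map Complex.ofReal) *ᵥ z j) = 0 →
       ∀ i, ∀ x : Fin K → ℝ,
         ((∀ p, x p = (z i p).re) ∨ (∀ p, x p = (z i p).im)) →
         ∀ u ∈ D, ∀ v ∈ D, x ⬝ᵥ G u *ᵥ x = x ⬝ᵥ G v *ᵥ x) := by
  classical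
  set n := D.card with hncard
  have hn0 : 0 < n := Finset.card_pos.2 hDne
  set m := n - 1 with hmdef
  set e := D.orderIsoOfFin rfl with hedef
  set d : ℕ → ℝ := fun k => if h : k < n then (e ⟨k, h⟩ : ℝ) else 0 with hddef
  have hdmem : ∀ k, k ≤ m → d k ∈ D := by
    intro k hk
    have hk' : k < n := by omega
    simp only [hddef, dif_pos hk']
    exact (e ⟨k, hk'⟩).2
  have hdnn : ∀ k, k ≤ m → 0 ≤ d k := fun k hk => hD0 _ (hdmem k hk)
  have hdlt : ∀ k, 1 ≤ k → k ≤ m → d (k-1) < d k := by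
    intro k h1 h2
    have hk' : k < n := by omega
    have hk'' : k - 1 < n := by omega
    simp only [hddef, dif_pos hk', dif_pos hk'']
    have : (⟨k - 1, hk''⟩ : Fin n) < ⟨k, hk'⟩ := by
      simp [Fin.lt_def]; omega
    exact_mod_cast e.strictMono this
  have hsurj : ∀ r ∈ D, ∃ l, l ≤ m ∧ d l = r := by
    intro r hr
    refine ⟨(e.symm ⟨r, hr⟩ : Fin n), by omega, ?_⟩
    have hlt : ((e.symm ⟨r, hr⟩ : Fin n) : ℕ) < n := (e.symm ⟨r, hr⟩).2
    simp only [hddef, dif_pos hlt]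
    have : e (e.symm ⟨r, hr⟩) = ⟨r, hr⟩ := e.apply_symm_apply _
    rw [show (⟨(e.symm ⟨r, hr⟩ : Fin n), hlt⟩ : Fin n) = e.symm ⟨r, hr⟩ from by ext; rfl, this]
  -- matrix slopes
  set SM : ℕ → Matrix (Fin K) (Fin K) ℝ := fun k =>
    if 1 ≤ k ∧ k ≤ m then (d k - d (k-1))⁻¹ • (G (d k) - G (d (k-1))) else 0 with hSMdef
  have hentry : ∀ (p q : Fin K) (k : ℕ), SM k p q = Sl m d (fun l => G (d l) p q) k := by
    intro p q k
    simp only [hSMdef, Sl]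
    split_ifs with h
    · simp only [Matrix.smul_apply, Matrix.sub_apply, smul_eq_mul]
      ring
    · simp
  have hquad : ∀ (x : Fin K → ℝ) (k : ℕ),
      x ⬝ᵥ SM k *ᵥ x = Sl m d (fun l => x ⬝ᵥ G (d l) *ᵥ x) k := by
    intro x k
    simp only [hSMdef, Sl]
    split_ifs with h
    · rw [Matrix.smul_mulVec, dotProduct_smul, smul_eq_mul,
        Matrix.sub_mulVec, dotProduct_sub]
      ring
    · simp
  have hdec : ∀ i j (p q : Fin K), G |t i - t j| p q = G (d m) p q
      + ∑ k ∈ Finset.range m, max (d (k+1) - |t i - t j|) 0 * (SM (k+2) - SM (k+1)) p q := by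
    intro i j p q
    obtain ⟨l, hlm, hl⟩ := hsurj _ (hDd i j)
    rw [← hl]
    have hsd := seq_decomp m d hdlt (fun l => G (d l) p q) (m - l) l (by omega)
    rw [hsd]
    congr 1
    refine Finset.sum_congr rfl fun k _ => ?_
    rw [Matrix.sub_apply, hentry, hentry]
    ring
  have hCpsd : ∀ k ∈ Finset.range m, (SM (k+2) - SM (k+1)).PosSemidef := by
    intro k hk
    rw [Finset.mem_range] at hk
    have hSMsym : ∀ j, (SM j)ᵀ = SM j := by
      intro j
      simp only [hSMdef]
      split_ifs with h
      · rw [Matrix.transpose_smul, Matrix.transpose_sub,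
          hsym _ (hdnn j h.2), hsym _ (hdnn (j-1) (by omega))]
      · exact Matrix.transpose_zero
    refine psd_of_real _ (by rw [Matrix.transpose_sub, hSMsym, hSMsym]) ?_
    intro x
    rw [Matrix.sub_mulVec, dotProduct_sub, hquad, hquad, sub_nonneg]
    set g : ℕ → ℝ := fun l => x ⬝ᵥ G (d l) *ᵥ x with hgdef
    have hk1 : 1 ≤ k + 1 ∧ k + 1 ≤ m := ⟨by omega, by omega⟩
    have hslope1 : Sl m d g (k+1) = (g (k+1) - g k) * (d (k+1) - d k)⁻¹ := by
      simp only [Sl, if_pos hk1]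
      norm_num
    by_cases hk2 : k + 2 ≤ m
    · have hslope2 : Sl m d g (k+2) = (g (k+2) - g (k+1)) * (d (k+2) - d (k+1))⁻¹ := by
        simp only [Sl, if_pos (⟨by omega, hk2⟩ : 1 ≤ k + 2 ∧ k + 2 ≤ m)]
        norm_num
      rw [hslope1, hslope2]
      have hcv := (hconv x).slope_mono_adjacent
        (Set.mem_Ici.2 (hdnn k (by omega))) (Set.mem_Ici.2 (hdnn (k+2) hk2))
        (by simpa using hdlt (k+1) (by omega) (by omega))
        (by simpa using hdlt (k+2) (by omega) hk2)
      simp only [div_eq_mul_inv] at hcv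
      exact hcv
    · have hk2' : k + 2 = m + 1 := by omega
      have hslope2 : Sl m d g (k+2) = 0 := by
        simp only [Sl]
        rw [if_neg (by omega)]
      rw [hslope1, hslope2]
      have hle : g (k+1) ≤ g k := by
        simp only [hgdef]
        exact hmono x (d k) (d (k+1)) (hdnn k (by omega))
          (le_of_lt (by simpa using hdlt (k+1) (by omega) (by omega)))
      have hpos : 0 < d (k+1) - d k := by
        have := hdlt (k+1) (by omega) (by omega)
        simp only [Nat.add_sub_cancel] at this
        linarith
      have h1 : (g (k+1) - g k) * (d (k+1) - d k)⁻¹ ≤ 0 :=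
        mul_nonpos_of_nonpos_of_nonneg (by linarith) (le_of_lt (inv_pos.2 hpos))
      linarith
  have hGm : (G (d m)).PosSemidef :=
    psd_of_real _ (hsym _ (hdnn m le_rfl)) (hnonneg _ (hdnn m le_rfl))
  have h1 : ∀ i j, star (z i) ⬝ᵥ ((G |t i - t j|).map Complex.ofReal) *ᵥ z j
      = star (z i) ⬝ᵥ ((G (d m)).map Complex.ofReal) *ᵥ z j
        + ∑ k ∈ Finset.range m, ((max (d (k+1) - |t i - t j|) 0 : ℝ) : ℂ)
            * (star (z i) ⬝ᵥ (((SM (k+2) - SM (k+1))).map Complex.ofReal) *ᵥ z j) := by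
    intro i j
    exact contract_decomp _ _ _ _ _ _ _ (fun p q => hdec i j p q)
  have hQ : (∑ i, ∑ j, star (z i) ⬝ᵥ ((G |t i - t j|).map Complex.ofReal) *ᵥ z j)
      = (∑ i, ∑ j, star (z i) ⬝ᵥ ((G (d m)).map Complex.ofReal) *ᵥ z j)
        + ∑ k ∈ Finset.range m, ∑ i, ∑ j, ((max (d (k+1) - |t i - t j|) 0 : ℝ) : ℂ)
            * (star (z i) ⬝ᵥ (((SM (k+2) - SM (k+1))).map Complex.ofReal) *ᵥ z j) := by
    simp_rw [h1, Finset.sum_add_distrib]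
    congr 1
    exact (Finset.sum_congr rfl fun i _ => Finset.sum_comm).trans Finset.sum_comm
  have hconstnn : 0 ≤ ∑ i, ∑ j, star (z i) ⬝ᵥ ((G (d m)).map Complex.ofReal) *ᵥ z j :=
    const_psd_sum _ (psd_map _ hGm) z
  have htent := fun k (hk : k ∈ Finset.range m) =>
    tent_psd_matrix (d (k+1)) _ (psd_map _ (hCpsd k hk)) t z
  have htentnn : ∀ k ∈ Finset.range m,
      0 ≤ ∑ i, ∑ j, ((max (d (k+1) - |t i - t j|) 0 : ℝ) : ℂ)
          * (star (z i) ⬝ᵥ (((SM (k+2) - SM (k+1))).map Complex.ofReal) *ᵥ z j) :=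
    fun k hk => (htent k hk).1
  have hpos : 0 ≤ ∑ i, ∑ j, star (z i) ⬝ᵥ ((G |t i - t j|).map Complex.ofReal) *ᵥ z j := by
    rw [hQ]
    exact add_nonneg hconstnn (Finset.sum_nonneg htentnn)
  refine ⟨hpos, ?_⟩
  intro ht hQ0 i x hx u hu v hv
  rw [hQ] at hQ0
  have hz0 := (add_eq_zero_iff_of_nonneg hconstnn (Finset.sum_nonneg htentnn)).1 hQ0
  have hk0 : ∀ k ∈ Finset.range m,
      (∑ i, ∑ j, ((max (d (k+1) - |t i - t j|) 0 : ℝ) : ℂ)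
          * (star (z i) ⬝ᵥ (((SM (k+2) - SM (k+1))).map Complex.ofReal) *ᵥ z j)) = 0 :=
    (Finset.sum_eq_zero_iff_of_nonneg htentnn).1 hz0.2
  have hCz : ∀ k ∈ Finset.range m,
      ((SM (k+2) - SM (k+1)).map Complex.ofReal) *ᵥ z i = 0 := by
    intro k hk
    rw [Finset.mem_range] at hk
    have hspos : 0 < d (k+1) := by
      have h1 := hdlt (k+1) (by omega) (by omega)
      simp only [Nat.add_sub_cancel] at h1
      have := hdnn k (by omega)
      linarith
    exact (htent k (Finset.mem_range.2 hk)).2 hspos ht (hk0 k (Finset.mem_range.2 hk)) i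
  have hCx : ∀ k ∈ Finset.range m, (SM (k+2) - SM (k+1)) *ᵥ x = 0 := by
    intro k hk
    funext p
    have hrow := congrFun (hCz k hk) p
    simp only [Matrix.mulVec, dotProduct, Matrix.map_apply, Pi.zero_apply] at hrow
    show ((SM (k+2) - SM (k+1)) *ᵥ x) p = 0
    simp only [Matrix.mulVec, dotProduct]
    rcases hx with hxr | hxi
    · have : ∀ q, (SM (k+2) - SM (k+1)) p q * x q
          = ((((SM (k+2) - SM (k+1)) p q : ℝ) : ℂ) * z i q).re := by
        intro q
        rw [hxr q]
        simp [Complex.mul_re]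
      simp_rw [this]
      rw [← Complex.re_sum, hrow, Complex.zero_re]
    · have : ∀ q, (SM (k+2) - SM (k+1)) p q * x q
          = ((((SM (k+2) - SM (k+1)) p q : ℝ) : ℂ) * z i q).im := by
        intro q
        rw [hxi q]
        simp [Complex.mul_im]
      simp_rw [this]
      rw [← Complex.im_sum, hrow, Complex.zero_im]
  set g : ℕ → ℝ := fun l => x ⬝ᵥ G (d l) *ᵥ x with hgdef2
  have hSdiff : ∀ k ∈ Finset.range m, Sl m d g (k+2) - Sl m d g (k+1) = 0 := by
    intro k hk
    have hq : x ⬝ᵥ (SM (k+2) - SM (k+1)) *ᵥ x = 0 := by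
      rw [hCx k hk, dotProduct_zero]
    rw [Matrix.sub_mulVec, dotProduct_sub, hquad, hquad] at hq
    exact hq
  have hgconst : ∀ l, l ≤ m → g l = g m := by
    intro l hl
    have hsd := seq_decomp m d hdlt g (m - l) l (by omega)
    rw [hsd, Finset.sum_eq_zero, add_zero]
    intro k hk
    rw [hSdiff k hk, zero_mul]
  obtain ⟨lu, hlu, hlu'⟩ := hsurj u hu
  obtain ⟨lv, hlv, hlv'⟩ := hsurj v hv
  calc x ⬝ᵥ G u *ᵥ x = g lu := by rw [hgdef2]; simp only []; rw [hlu']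
    _ = g m := hgconst lu hlu
    _ = g lv := (hgconst lv hlv).symm
    _ = x ⬝ᵥ G v *ᵥ x := by rw [hgdef2]; simp only []; rw [hlv']
end

noncomputable section
private lemma dotmap_real {K : ℕ} (x y : Fin K → ℝ) (M : Matrix (Fin K) (Fin K) ℝ) :
    star (fun p => (x p : ℂ)) ⬝ᵥ (M.map Complex.ofReal) *ᵥ (fun p => (y p : ℂ))
      = ((x ⬝ᵥ M *ᵥ y : ℝ) : ℂ) := by
  rw [dotmap]
  have h : x ⬝ᵥ M *ᵥ y = ∑ p, ∑ q, M p q * (x p * y q) := by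
    simp only [dotProduct, Matrix.mulVec, Finset.mul_sum]
    exact Finset.sum_congr rfl fun p _ => Finset.sum_congr rfl fun q _ => by ring
  rw [h]
  push_cast
  refine Finset.sum_congr rfl fun p _ => Finset.sum_congr rfl fun q _ => ?_
  rw [Complex.conj_ofReal]


theorem convex_kernel_strictPosDef_iff {K : ℕ}
    (G : ℝ → Matrix (Fin K) (Fin K) ℝ)
    (hsym : ∀ t : ℝ, 0 ≤ t → (G t)ᵀ = G t)
    (hnonneg : ∀ t : ℝ, 0 ≤ t → ∀ x : Fin K → ℝ, 0 ≤ x ⬝ᵥ (G t) *ᵥ x)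
    (hmono : ∀ x : Fin K → ℝ, ∀ s t : ℝ, 0 ≤ s → s ≤ t →
      x ⬝ᵥ (G t) *ᵥ x ≤ x ⬝ᵥ (G s) *ᵥ x)
    (hconv : ∀ x : Fin K → ℝ, ConvexOn ℝ (Set.Ici (0 : ℝ)) (fun t => x ⬝ᵥ (G t) *ᵥ x)) :
    IsStrictPosDefMatrixFun (fun t => (G |t|).map Complex.ofReal) ↔
      ∀ x : Fin K → ℝ, x ≠ 0 →
        ∃ s t : ℝ, 0 ≤ s ∧ 0 ≤ t ∧ x ⬝ᵥ (G s) *ᵥ x ≠ x ⬝ᵥ (G t) *ᵥ x := by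

  constructor
  · intro hSPD x hx
    by_contra hcon
    push_neg at hcon
    set xc : Fin K → ℂ := fun p => (x p : ℂ) with hxc
    set tt : Fin 2 → ℝ := fun a => (a.val : ℝ) with htt
    set zz : Fin 2 → Fin K → ℂ := ![xc, -xc] with hzz
    have hinj : Function.Injective tt := fun a b hab => Fin.ext (Nat.cast_injective hab)
    obtain ⟨_, hstrict⟩ := hSPD 2 tt zz hinj
    have hA1 : |(0:ℝ) - 1| = 1 := by rw [zero_sub, abs_neg, abs_one]
    have hA2 : |(1:ℝ) - 0| = 1 := by rw [sub_zero, abs_one]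
    have hA0 : |(0:ℝ) - 0| = 0 := by rw [sub_self, abs_zero]
    have hA3 : |(1:ℝ) - 1| = 0 := by rw [sub_self, abs_zero]
    have hQval : (∑ i, ∑ j,
        star (zz i) ⬝ᵥ ((fun τ => (G |τ|).map Complex.ofReal) (tt i - tt j)) *ᵥ zz j) = 0 := by
      have e1 : x ⬝ᵥ G 0 *ᵥ x = x ⬝ᵥ G 1 *ᵥ x := hcon 0 1 le_rfl zero_le_one
      simp only [Fin.sum_univ_two, htt, hzz, Fin.val_zero, Fin.val_one, Nat.cast_zero,
        Nat.cast_one, Matrix.cons_val_zero, Matrix.cons_val_one, Matrix.head_cons]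
      rw [hA1, hA2, hA0, hA3]
      simp only [Matrix.mulVec_neg, dotProduct_neg, star_neg, neg_dotProduct,
        neg_neg]
      rw [hxc, dotmap_real x x (G 0), dotmap_real x x (G 1), e1]
      ring
    have hz0 := hstrict hQval 0
    apply hx
    funext p
    have hzp := congrFun hz0 p
    simp only [hzz, Matrix.cons_val_zero, hxc, Pi.zero_apply] at hzp
    exact_mod_cast hzp
  · intro hnc N t z ht
    set D0 : Finset ℝ := insert 0
      ((Finset.univ ×ˢ Finset.univ).image fun p : Fin N × Fin N => |t p.1 - t p.2|) with hD0def
    have hD0nn : ∀ r ∈ D0, 0 ≤ r := by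
      intro r hr
      rcases Finset.mem_insert.1 hr with rfl | hr
      · exact le_rfl
      · obtain ⟨p, _, rfl⟩ := Finset.mem_image.1 hr
        exact abs_nonneg _
    have hD0d : ∀ i j, |t i - t j| ∈ D0 := fun i j =>
      Finset.mem_insert_of_mem (Finset.mem_image.2
        ⟨(i, j), Finset.mem_product.2 ⟨Finset.mem_univ _, Finset.mem_univ _⟩, rfl⟩)
    constructor
    · exact (core G hsym hnonneg hmono hconv t z D0 ⟨0, Finset.mem_insert_self _ _⟩
        hD0nn hD0d).1
    · intro hQ0 i
      by_contra hzi
      have hex : (∃ p, (z i p).re ≠ 0) ∨ (∃ p, (z i p).im ≠ 0) := by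
        by_contra hno
        push_neg at hno
        exact hzi (funext fun p => Complex.ext (hno.1 p) (hno.2 p))
      have hxc : ∃ x : Fin K → ℝ, x ≠ 0 ∧
          ((∀ p, x p = (z i p).re) ∨ (∀ p, x p = (z i p).im)) := by
        rcases hex with ⟨p, hp⟩ | ⟨p, hp⟩
        · exact ⟨fun p => (z i p).re, fun h => hp (congrFun h p), Or.inl fun _ => rfl⟩
        · exact ⟨fun p => (z i p).im, fun h => hp (congrFun h p), Or.inr fun _ => rfl⟩
      obtain ⟨x, hx0, hxspec⟩ := hxc
      obtain ⟨u, v, hu, hv, hne⟩ := hnc x hx0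
      set D : Finset ℝ := insert u (insert v D0) with hDdef
      have hDnn : ∀ r ∈ D, 0 ≤ r := by
        intro r hr
        rcases Finset.mem_insert.1 hr with rfl | hr
        · exact hu
        rcases Finset.mem_insert.1 hr with rfl | hr
        · exact hv
        · exact hD0nn r hr
      have hDd : ∀ i j, |t i - t j| ∈ D := fun i j =>
        Finset.mem_insert_of_mem (Finset.mem_insert_of_mem (hD0d i j))
      exact hne ((core G hsym hnonneg hmono hconv t z D ⟨u, Finset.mem_insert_self _ _⟩
        hDnn hDd).2 ht hQ0 i x hxspec u (Finset.mem_insert_self _ _)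
        v (Finset.mem_insert_of_mem (Finset.mem_insert_self _ _)))
end
end

section
/- Let ρ, κ, κ̃ > 0 and define the 2×2 kernel G(t) with diagonal entries exp(−κt) and off-diagonal entries ρ·exp(−κ̃t). Then G is nonincreasing (t ↦ x^⊤G(t)x nonincreasing for all x ∈ ℝ²) if and only if ρ ≤ κ/κ̃ ≤ 1; and G is convex (t ↦ x^⊤G(t)x convex for all x) if and only if ρ ≤ κ²/κ̃² ≤ 1. -/
open Matrix Real Filter Set Topology

private lemma hasDerivAt_comb (a c k k' : ℝ) (t : ℝ) :
    HasDerivAt (fun s => a * Real.exp (-k * s) + c * Real.exp (-k' * s))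
      (a * (-k) * Real.exp (-k * t) + c * (-k') * Real.exp (-k' * t)) t := by
  have h1 : HasDerivAt (fun s : ℝ => -k * s) (-k) t := by
    simpa using (hasDerivAt_id t).const_mul (-k)
  have h2 : HasDerivAt (fun s : ℝ => -k' * s) (-k') t := by
    simpa using (hasDerivAt_id t).const_mul (-k')
  have := (h1.exp.const_mul a).add (h2.exp.const_mul c)
  exact this.congr_deriv (by ring)

private lemma deriv_nonneg_of_monotoneOn' {f f' : ℝ → ℝ}
    (hd : ∀ t, HasDerivAt f (f' t) t) (hm : MonotoneOn f (Set.Ici 0))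
    {t : ℝ} (ht : 0 ≤ t) : 0 ≤ f' t := by
  have h1 : Tendsto (slope f t) (𝓝[>] t) (𝓝 (f' t)) :=
    (hasDerivAt_iff_tendsto_slope.1 (hd t)).mono_left
      (nhdsWithin_mono _ fun s hs => by simpa using (ne_of_gt hs : s ≠ t))
  refine ge_of_tendsto h1 ?_
  filter_upwards [self_mem_nhdsWithin] with s hs
  have hts : t < s := hs
  have hle := hm (Set.mem_Ici.2 ht) (Set.mem_Ici.2 (ht.trans hts.le)) hts.le
  rw [slope_def_field]
  exact div_nonneg (by linarith) (by linarith)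

private lemma deriv_nonpos_of_antitoneOn' {f f' : ℝ → ℝ}
    (hd : ∀ t, HasDerivAt f (f' t) t) (hm : AntitoneOn f (Set.Ici 0))
    {t : ℝ} (ht : 0 ≤ t) : f' t ≤ 0 := by
  have := deriv_nonneg_of_monotoneOn' (f := fun s => -f s) (f' := fun s => -f' s)
    (fun s => (hd s).neg) (fun a ha b hb hab => neg_le_neg (hm ha hb hab)) ht
  simpa using neg_nonneg.1 this

private lemma core_fwd {A B k k' : ℝ} (hB : 0 < B)
    (h : ∀ t : ℝ, 0 ≤ t → B * Real.exp (-k' * t) ≤ A * Real.exp (-k * t)) :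
    B ≤ A ∧ k ≤ k' := by
  constructor
  · simpa using h 0 le_rfl
  · by_contra hlt
    push_neg at hlt
    have key : ∀ t : ℝ, 0 ≤ t → B ≤ A * Real.exp (-((k - k') * t)) := by
      intro t ht
      have h0 := h t ht
      have he : Real.exp (-k * t) = Real.exp (-((k - k') * t)) * Real.exp (-k' * t) := by
        rw [← Real.exp_add]; ring_nf
      rw [he, ← mul_assoc] at h0
      exact (mul_le_mul_iff_of_pos_right (Real.exp_pos _)).1 h0
    have htend : Tendsto (fun t : ℝ => A * Real.exp (-((k - k') * t))) atTop (𝓝 0) := by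
      have h0 : Tendsto (fun t : ℝ => (k - k') * t) atTop atTop :=
        Tendsto.const_mul_atTop (by linarith) tendsto_id
      simpa using (Real.tendsto_exp_neg_atTop_nhds_zero.comp h0).const_mul A
    have : B ≤ 0 := ge_of_tendsto htend
      (by filter_upwards [eventually_ge_atTop (0:ℝ)] with t ht using key t ht)
    linarith

private lemma core_rev {A B k k' : ℝ} (hB : 0 ≤ B) (hBA : B ≤ A) (hkk : k ≤ k')
    {t : ℝ} (ht : 0 ≤ t) : B * Real.exp (-k' * t) ≤ A * Real.exp (-k * t) :=
  mul_le_mul hBA (Real.exp_le_exp.2 (by nlinarith)) (Real.exp_pos _).le (hB.trans hBA)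

private lemma aux_anti {a c k k' : ℝ}
    (h : AntitoneOn (fun t => a * Real.exp (-k * t) + c * Real.exp (-k' * t)) (Set.Ici 0))
    {t : ℝ} (ht : 0 ≤ t) :
    a * (-k) * Real.exp (-k * t) + c * (-k') * Real.exp (-k' * t) ≤ 0 :=
  deriv_nonpos_of_antitoneOn' (fun s => hasDerivAt_comb a c k k' s) h ht

private lemma aux_conv {a c k k' : ℝ}
    (h : ConvexOn ℝ (Set.Ici 0) (fun t => a * Real.exp (-k * t) + c * Real.exp (-k' * t)))
    {t : ℝ} (ht : 0 ≤ t) :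
    0 ≤ a * (-k) * (-k) * Real.exp (-k * t) + c * (-k') * (-k') * Real.exp (-k' * t) := by
  have hderiv : deriv (fun s => a * Real.exp (-k * s) + c * Real.exp (-k' * s)) =
      fun s => a * (-k) * Real.exp (-k * s) + c * (-k') * Real.exp (-k' * s) :=
    funext fun s => (hasDerivAt_comb a c k k' s).deriv
  have hmono : MonotoneOn
      (fun s => a * (-k) * Real.exp (-k * s) + c * (-k') * Real.exp (-k' * s)) (Set.Ici 0) := by
    rw [← hderiv]
    exact h.monotoneOn_deriv fun s _ => (hasDerivAt_comb a c k k' s).differentiableAt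
  exact deriv_nonneg_of_monotoneOn'
    (fun s => hasDerivAt_comb (a * -k) (c * -k') k k' s) hmono ht

private lemma anti_rev {a c k k' ρ : ℝ} (hρ : 0 < ρ) (hk' : 0 < k') (hkk' : k ≤ k')
    (hB : ρ * k' ≤ k) (hca : -(ρ * a) ≤ c) (ha : 0 ≤ a) :
    AntitoneOn (fun t => a * Real.exp (-k * t) + c * Real.exp (-k' * t)) (Set.Ici 0) := by
  refine antitoneOn_of_deriv_nonpos (convex_Ici 0) (Continuous.continuousOn (by fun_prop))
    (fun t _ => (hasDerivAt_comb a c k k' t).differentiableAt.differentiableWithinAt) ?_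
  intro t ht
  rw [interior_Ici] at ht
  rw [(hasDerivAt_comb a c k k' t).deriv]
  have key : (ρ * k') * Real.exp (-k' * t) ≤ k * Real.exp (-k * t) :=
    core_rev (by positivity) hB hkk' ht.le
  nlinarith [mul_le_mul_of_nonneg_left key ha,
    mul_nonneg (mul_nonneg (by nlinarith : (0:ℝ) ≤ ρ * a + c) hk'.le) (Real.exp_pos (-k' * t)).le]

private lemma conv_rev {a c k k' ρ : ℝ} (hρ : 0 < ρ) (hk' : 0 < k') (hkk' : k ≤ k')
    (hB : ρ * k' ^ 2 ≤ k ^ 2) (hca : -(ρ * a) ≤ c) (ha : 0 ≤ a) :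
    ConvexOn ℝ (Set.Ici 0) (fun t => a * Real.exp (-k * t) + c * Real.exp (-k' * t)) := by
  have hderiv : deriv (fun s => a * Real.exp (-k * s) + c * Real.exp (-k' * s)) =
      fun s => a * (-k) * Real.exp (-k * s) + c * (-k') * Real.exp (-k' * s) :=
    funext fun s => (hasDerivAt_comb a c k k' s).deriv
  refine convexOn_of_deriv2_nonneg (convex_Ici 0) (Continuous.continuousOn (by fun_prop))
    (fun t _ => (hasDerivAt_comb a c k k' t).differentiableAt.differentiableWithinAt) ?_ ?_
  · rw [hderiv]
    exact fun t _ =>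
      (hasDerivAt_comb (a * -k) (c * -k') k k' t).differentiableAt.differentiableWithinAt
  · intro t ht
    rw [interior_Ici] at ht
    have h2 : deriv^[2] (fun s => a * Real.exp (-k * s) + c * Real.exp (-k' * s)) t =
        a * -k * (-k) * Real.exp (-k * t) + c * -k' * (-k') * Real.exp (-k' * t) := by
      simp only [Function.iterate_succ, Function.iterate_zero, Function.comp_apply, id_eq]
      rw [hderiv, (hasDerivAt_comb (a * -k) (c * -k') k k' t).deriv]
    rw [h2]
    have key : (ρ * k' ^ 2) * Real.exp (-k' * t) ≤ k ^ 2 * Real.exp (-k * t) :=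
      core_rev (by positivity) hB hkk' ht.le
    nlinarith [mul_le_mul_of_nonneg_left key ha,
      mul_nonneg (mul_nonneg (by nlinarith : (0:ℝ) ≤ ρ * a + c) (sq_nonneg k'))
        (Real.exp_pos (-k' * t)).le]

theorem exp_kernel_nonincreasing_convex_iff (ρ κ κ' : ℝ)
    (hρ : 0 < ρ) (hκ : 0 < κ) (hκ' : 0 < κ')
    (G : ℝ → Matrix (Fin 2) (Fin 2) ℝ)
    (hG : ∀ t : ℝ, G t =
      !![Real.exp (-κ * t), ρ * Real.exp (-κ' * t);
         ρ * Real.exp (-κ' * t), Real.exp (-κ * t)]) :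
    ((∀ x : Fin 2 → ℝ, AntitoneOn (fun t => x ⬝ᵥ (G t) *ᵥ x) (Set.Ici (0 : ℝ))) ↔
        (ρ ≤ κ / κ' ∧ κ / κ' ≤ 1)) ∧
      ((∀ x : Fin 2 → ℝ, ConvexOn ℝ (Set.Ici (0 : ℝ)) (fun t => x ⬝ᵥ (G t) *ᵥ x)) ↔
        (ρ ≤ κ ^ 2 / κ' ^ 2 ∧ κ ^ 2 / κ' ^ 2 ≤ 1)) := by
  have hκ'2 : (0:ℝ) < κ' ^ 2 := by positivity
  have hform : ∀ x : Fin 2 → ℝ, (fun t => x ⬝ᵥ (G t) *ᵥ x) =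
      fun t => (x 0 ^ 2 + x 1 ^ 2) * Real.exp (-κ * t) +
        (2 * ρ * (x 0 * x 1)) * Real.exp (-κ' * t) := by
    intro x; funext t; rw [hG t]
    simp [Matrix.mulVec, dotProduct, Fin.sum_univ_two]
    ring
  constructor
  · constructor
    · intro h
      have hx := h ![1, -1]
      rw [hform ![1, -1]] at hx
      have h1 : ∀ t : ℝ, 0 ≤ t →
          (2 * (ρ * κ')) * Real.exp (-κ' * t) ≤ (2 * κ) * Real.exp (-κ * t) := by
        intro t ht
        have h0 := aux_anti hx ht
        norm_num [Matrix.cons_val_zero, Matrix.cons_val_one, Matrix.head_cons] at h0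
        simp only [neg_mul]
        nlinarith [h0]
      obtain ⟨hBA, hkk⟩ := core_fwd (by positivity) h1
      exact ⟨(le_div_iff₀ hκ').2 (by linarith), (div_le_one hκ').2 hkk⟩
    · rintro ⟨h1, h2⟩
      have hB : ρ * κ' ≤ κ := (le_div_iff₀ hκ').1 h1
      have hkk : κ ≤ κ' := (div_le_one hκ').1 h2
      intro x
      rw [hform x]
      exact anti_rev hρ hκ' hkk hB (by nlinarith [sq_nonneg (x 0 + x 1)]) (by positivity)
  · constructor
    · intro h
      have hx := h ![1, -1]
      rw [hform ![1, -1]] at hx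
      have h1 : ∀ t : ℝ, 0 ≤ t →
          (2 * (ρ * κ' ^ 2)) * Real.exp (-κ' * t) ≤ (2 * κ ^ 2) * Real.exp (-κ * t) := by
        intro t ht
        have h0 := aux_conv hx ht
        norm_num [Matrix.cons_val_zero, Matrix.cons_val_one, Matrix.head_cons] at h0
        simp only [neg_mul]
        nlinarith [h0]
      obtain ⟨hBA, hkk⟩ := core_fwd (by positivity) h1
      exact ⟨(le_div_iff₀ hκ'2).2 (by linarith), (div_le_one hκ'2).2 (by nlinarith)⟩
    · rintro ⟨h1, h2⟩
      have hB : ρ * κ' ^ 2 ≤ κ ^ 2 := (le_div_iff₀ hκ'2).1 h1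
      have hsq : κ ^ 2 ≤ κ' ^ 2 := (div_le_one hκ'2).1 h2
      have hkk : κ ≤ κ' := by nlinarith
      intro x
      rw [hform x]
      exact conv_rev hρ hκ' hkk hB (by nlinarith [sq_nonneg (x 0 + x 1)]) (by positivity)
end
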